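/- arXiv:2509.24810 — 18 statements merged into one kernel-verified Lean document; each statement's English description precedes it below -/
import Mathlib

section
/- Let B be an arbitrary category. The following are equivalent: (a) B is idempotent complete (every idempotent endomorphism in B splits, i.e. can be written as h ∘ g with g ∘ h = id); (b) every idempotent endomorphism in B has a 0-kernel; (c) every idempotent endomorphism in B has a 0-cokernel. -/
open CategoryTheory Limits

universe v u

/-- A `0`-kernel of `f : X ⟶ Y` is a monomorphism `g : Z ⟶ Y` such that
`f = g ∘ h` for some split epimorphism `h`. -/
def IsZeroKernel {B : Type u} [Category.{v} B] {X Y Z : B} (f : X ⟶ Y) (g : Z ⟶ Y) : Prop :=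
  Mono g ∧ ∃ h : X ⟶ Z, IsSplitEpi h ∧ f = h ≫ g

/-- A `0`-cokernel of `f : X ⟶ Y` is an epimorphism `s : X ⟶ W` such that
`f = r ∘ s` for some split monomorphism `r`. -/
def IsZeroCokernel {B : Type u} [Category.{v} B] {X Y W : B} (f : X ⟶ Y) (s : X ⟶ W) : Prop :=
  Epi s ∧ ∃ r : W ⟶ Y, IsSplitMono r ∧ f = s ≫ r

theorem stmt0 (B : Type u) [Category.{v} B] :
    (IsIdempotentComplete B ↔
      ∀ (X : B) (e : X ⟶ X), e ≫ e = e → ∃ (Z : B) (g : Z ⟶ X), IsZeroKernel e g) ∧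
    (IsIdempotentComplete B ↔
      ∀ (X : B) (e : X ⟶ X), e ≫ e = e → ∃ (W : B) (s : X ⟶ W), IsZeroCokernel e s) := by
  constructor
  · constructor
    · intro h X e he
      obtain ⟨Y, i, p, hip, hpi⟩ := IsIdempotentComplete.idempotents_split X e he
      refine ⟨Y, i, ?_, p, IsSplitEpi.mk ⟨i, hip⟩, hpi.symm⟩
      haveI : IsSplitMono i := ⟨⟨⟨p, hip⟩⟩⟩
      infer_instance
    · intro h
      constructor
      intro X e he
      obtain ⟨Z, g, hg, p, hp, hep⟩ := h X e he
      refine ⟨Z, g, p, ?_, hep.symm⟩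
      haveI := hg
      haveI := hp
      rw [← cancel_epi p, ← cancel_mono g]
      simp only [Category.comp_id, ← Category.assoc, ← hep, he]
      rw [Category.assoc, ← hep, he]
  · constructor
    · intro h X e he
      obtain ⟨Y, i, p, hip, hpi⟩ := IsIdempotentComplete.idempotents_split X e he
      refine ⟨Y, p, ?_, i, IsSplitMono.mk ⟨p, hip⟩, hpi.symm⟩
      haveI : IsSplitEpi p := ⟨⟨⟨i, hip⟩⟩⟩
      infer_instance
    · intro h
      constructor
      intro X e he
      obtain ⟨W, s, hs, r, hr, hesr⟩ := h X e he
      refine ⟨W, r, s, ?_, hesr.symm⟩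
      haveI := hs
      haveI := hr
      rw [← cancel_epi s, ← cancel_mono r]
      simp only [Category.comp_id, ← Category.assoc, ← hesr, he]
      rw [Category.assoc, ← hesr, he]
end

section
/- Let B be an arbitrary category, and let f : X ⟶ Y and g : Z ⟶ Y be morphisms in B. Then g is a 0-kernel of f if and only if the following two conditions hold: (a) there exists a morphism g' : Z ⟶ X with g = f ∘ g'; and (b) whenever w : W ⟶ Y is a morphism such that w = f ∘ w' for some w' : W ⟶ X, there exists a unique morphism u : W ⟶ Z with w = g ∘ u. -/
open CategoryTheory Limits

universe v u

theorem stmt1 {B : Type u} [Category.{v} B] {X Y Z : B} (f : X ⟶ Y) (g : Z ⟶ Y) :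
    IsZeroKernel f g ↔
      (∃ g' : Z ⟶ X, g = g' ≫ f) ∧
      (∀ (W : B) (w : W ⟶ Y), (∃ w' : W ⟶ X, w = w' ≫ f) →
        ∃! u : W ⟶ Z, w = u ≫ g) := by
  constructor
  · rintro ⟨hg, h, ⟨⟨s, hs⟩⟩, hf⟩
    constructor
    · exact ⟨s, by rw [hf, ← Category.assoc, hs, Category.id_comp]⟩
    · rintro W w ⟨w', rfl⟩
      refine ⟨w' ≫ h, by simp [hf], ?_⟩
      intro u hu
      exact hg.right_cancellation _ _ (by rw [← hu, hf, Category.assoc])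
  · rintro ⟨⟨g', hg'⟩, huniv⟩
    obtain ⟨h, hh, hhu⟩ := huniv X f ⟨𝟙 X, (Category.id_comp f).symm⟩
    have hmono : Mono g := by
      constructor
      intro W a b hab
      obtain ⟨u, hu, huu⟩ := huniv W (a ≫ g) ⟨a ≫ g', by rw [Category.assoc, ← hg']⟩
      rw [show a = u from huu a rfl, show b = u from huu b hab]
    refine ⟨hmono, h, ⟨⟨g', ?_⟩⟩, hh⟩
    exact hmono.right_cancellation _ _ (by rw [Category.assoc, ← hh, ← hg', Category.id_comp])
end

section
/- Let C be a preadditive category that has 0-kernels (every morphism of C has a 0-kernel). Then every morphism f of C has a kernel; moreover, every kernel of a morphism of C is a split monomorphism. -/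
open CategoryTheory Limits

universe v u

/-- A category has `0`-kernels if every morphism has a `0`-kernel. -/
def HasZeroKernels (B : Type u) [Category.{v} B] : Prop :=
  ∀ {X Y : B} (f : X ⟶ Y), ∃ (Z : B) (g : Z ⟶ Y), IsZeroKernel f g

/-- From `0`-kernels we can construct, for each `f`, a morphism `m` with a retraction `p`
which behaves like a kernel of `f`. -/
lemma hasZeroKernels_key {C : Type u} [Category.{v} C] [Preadditive C]
    (h : HasZeroKernels C) {X Y : C} (f : X ⟶ Y) :
    ∃ (W : C) (m : W ⟶ X) (p : X ⟶ W),
      m ≫ p = 𝟙 W ∧ m ≫ f = 0 ∧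
        ∀ {T : C} (t : T ⟶ X), t ≫ f = 0 → (t ≫ p) ≫ m = t := by
  obtain ⟨Z, g, hg, φ, hse, hfac⟩ := h f
  haveI := hg
  haveI := hse
  set s : Z ⟶ X := section_ φ with hs
  set e : X ⟶ X := 𝟙 X - φ ≫ s with he
  obtain ⟨W, m, hm, p, hp, hefac⟩ := h e
  haveI := hm
  haveI := hp
  have hsφ : s ≫ φ = 𝟙 Z := IsSplitEpi.id φ
  have heφ : e ≫ φ = 0 := by
    rw [he, Preadditive.sub_comp, Category.id_comp, Category.assoc, hsφ, Category.comp_id,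
      sub_self]
  have hmφ : m ≫ φ = 0 := by
    rw [← cancel_epi p, ← Category.assoc, ← hefac, heφ, comp_zero]
  have hmf : m ≫ f = 0 := by rw [hfac, ← Category.assoc, hmφ, zero_comp]
  have hee : e ≫ e = e := by
    have h1 : e ≫ (𝟙 X - φ ≫ s) = e := by
      rw [Preadditive.comp_sub, Category.comp_id, ← Category.assoc, heφ, zero_comp, sub_zero]
    rwa [← he] at h1
  have hmp : m ≫ p = 𝟙 W := by
    have key : p ≫ m ≫ p ≫ m = p ≫ m := by
      rw [show p ≫ m ≫ p ≫ m = (p ≫ m) ≫ p ≫ m from (Category.assoc _ _ _).symm, ← hefac, hee]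
    rw [← cancel_mono m, ← cancel_epi p, Category.id_comp, Category.assoc, key]
  refine ⟨W, m, p, hmp, hmf, fun {T} t ht => ?_⟩
  have htφ : t ≫ φ = 0 := by
    rw [← cancel_mono g, Category.assoc, ← hfac, ht, zero_comp]
  have hte : t ≫ e = t := by
    rw [he, Preadditive.comp_sub, Category.comp_id, ← Category.assoc, htφ, zero_comp, sub_zero]
  rw [Category.assoc, ← hefac, hte]

theorem stmt2 {C : Type u} [Category.{v} C] [Preadditive C] (h : HasZeroKernels C) :
    HasKernels C ∧
      ∀ {K X Y : C} (f : X ⟶ Y) (k : K ⟶ X) (w : k ≫ f = 0),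
        IsLimit (KernelFork.ofι k w) → IsSplitMono k := by
  constructor
  · constructor
    intro X Y f
    obtain ⟨W, m, p, hmp, hmf, hfac⟩ := hasZeroKernels_key h f
    exact HasLimit.mk ⟨KernelFork.ofι m hmf,
      KernelFork.IsLimit.ofι m hmf (fun t ht => t ≫ p) (fun t ht => hfac t ht)
        (fun t ht l hl => by
          show l = t ≫ p
          rw [← Category.comp_id l, ← hmp, ← Category.assoc, hl])⟩
  · intro K X Y f k w hk
    obtain ⟨W, m, p, hmp, hmf, hfac⟩ := hasZeroKernels_key h f
    haveI : Mono k := mono_of_isLimit_fork hk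
    have hl : hk.lift (KernelFork.ofι m hmf) ≫ k = m := hk.fac _ WalkingParallelPair.zero
    refine ⟨⟨⟨p ≫ hk.lift (KernelFork.ofι m hmf), ?_⟩⟩⟩
    rw [← cancel_mono k, Category.assoc, Category.assoc, hl, Category.id_comp, ← Category.assoc,
      hfac k w]
end

section
/- Let C be a 0-abelian category and let B be a full subcategory of C that contains a zero object and is closed under binary biproducts and under retracts (direct summands). Then B is a 0-abelian category; in particular B has 0-kernels and 0-cokernels. -/
open CategoryTheory Limits

universe v u

/-- A category has `0`-cokernels if every morphism has a `0`-cokernel. -/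
def HasZeroCokernels (B : Type u) [Category.{v} B] : Prop :=
  ∀ {X Y : B} (f : X ⟶ Y), ∃ (W : B) (s : X ⟶ W), IsZeroCokernel f s

attribute [local instance] CategoryTheory.Limits.hasBinaryBiproducts_of_finite_biproducts

section Aux

open CategoryTheory Limits

variable {C : Type u} [Category.{v} C] [Preadditive C] [HasFiniteBiproducts C]

/-- Closure of `P` under finite biproducts, from closure under binary biproducts,
zero objects and retracts. -/
lemma aux_biproduct_mem (P : C → Prop)
    (hzero : ∃ Z : C, P Z ∧ IsZero Z)
    (hbiprod : ∀ A B : C, P A → P B → P (A ⊞ B))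
    (hretract : ∀ A B : C, P B → ∀ (s : A ⟶ B) (r : B ⟶ A), s ≫ r = 𝟙 A → P A) :
    ∀ (n : ℕ) (f : Fin n → C), (∀ i, P (f i)) → P (⨁ f) := by
  intro n
  induction n with
  | zero =>
    intro f _
    obtain ⟨Z, hZ, hZzero⟩ := hzero
    have h1 : 𝟙 (⨁ f) = 0 := by
      rw [← biproduct.total]
      simp
    exact hretract _ Z hZ 0 0 (by rw [h1]; simp)
  | succ n ih =>
    intro f hf
    have hP : P (f 0 ⊞ ⨁ fun i : Fin n => f i.succ) :=
      hbiprod _ _ (hf 0) (ih _ fun i => hf i.succ)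
    refine hretract _ _ hP
      (biprod.lift (biproduct.π f 0) (biproduct.lift fun i : Fin n => biproduct.π f i.succ))
      (biprod.desc (biproduct.ι f 0) (biproduct.desc fun i : Fin n => biproduct.ι f i.succ)) ?_
    rw [biprod.lift_desc, biproduct.lift_desc, ← biproduct.total, Fin.sum_univ_succ]

end Aux

/-- A full subcategory (closed under the relevant structure) of a `0`-abelian category, i.e.
an additive category with `0`-kernels and `0`-cokernels, is again `0`-abelian. -/
theorem stmt3 {C : Type u} [Category.{v} C] [Preadditive C] [HasFiniteBiproducts C]
    (h0k : HasZeroKernels C) (h0c : HasZeroCokernels C)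
    (P : C → Prop)
    (hzero : ∃ Z : C, P Z ∧ IsZero Z)
    (hbiprod : ∀ A B : C, P A → P B → P (A ⊞ B))
    (hretract : ∀ A B : C, P B → ∀ (s : A ⟶ B) (r : B ⟶ A), s ≫ r = 𝟙 A → P A) :
    HasZeroObject (ObjectProperty.FullSubcategory P) ∧ HasFiniteBiproducts (ObjectProperty.FullSubcategory P) ∧
      HasZeroKernels (ObjectProperty.FullSubcategory P) ∧ HasZeroCokernels (ObjectProperty.FullSubcategory P) := by
  
  obtain ⟨Z0, hZ0, hZ0zero⟩ := hzero
  have hmem := aux_biproduct_mem P ⟨Z0, hZ0, hZ0zero⟩ hbiprod hretract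
  refine ⟨⟨⟨Z0, hZ0⟩, ?_⟩, ⟨fun n => ⟨fun f => ?_⟩⟩, ?_, ?_⟩
  · rw [IsZero.iff_id_eq_zero]
    exact ObjectProperty.hom_ext _ (hZ0zero.eq_of_src _ _)
  · -- biproducts of shape `Fin n`
    have hPf : P (⨁ fun i => (f i).obj) := hmem n _ fun i => (f i).property
    refine HasBiproduct.mk ⟨?_, ?_⟩
    · exact
        { pt := ⟨⨁ fun i => (f i).obj, hPf⟩
          π := fun j => ObjectProperty.homMk (biproduct.π (fun i => (f i).obj) j :
            (⨁ fun i => (f i).obj) ⟶ (f j).obj)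
          ι := fun j => ObjectProperty.homMk (biproduct.ι (fun i => (f i).obj) j :
            (f j).obj ⟶ ⨁ fun i => (f i).obj)
          ι_π := fun j j' => by
            by_cases h : j = j'
            · subst h
              simp only [dif_pos, eqToHom_refl]
              exact ObjectProperty.hom_ext _ (biproduct.ι_π_self _ j)
            · rw [dif_neg h]
              exact ObjectProperty.hom_ext _ (biproduct.ι_π_ne _ h) }
    · exact isBilimitOfTotal _ (ObjectProperty.hom_ext _ (((ObjectProperty.ι P).map_sum _ _).trans biproduct.total))
  · -- zero kernels
    intro X Y f
    obtain ⟨Z, g, hg, h, hsplit, heq⟩ := h0k f.hom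
    obtain ⟨⟨σ, hσ⟩⟩ := hsplit
    have hPZ : P Z := hretract Z X.obj X.property σ h hσ
    refine ⟨⟨Z, hPZ⟩, ObjectProperty.homMk g, ?_, ObjectProperty.homMk h, ?_, ObjectProperty.hom_ext _ heq⟩
    · exact ⟨fun {W} u v huv => ObjectProperty.hom_ext _ (hg.right_cancellation u.hom v.hom (congrArg (·.hom) huv))⟩
    · exact ⟨⟨⟨ObjectProperty.homMk σ, ObjectProperty.hom_ext _ hσ⟩⟩⟩
  · -- zero cokernels
    intro X Y f
    obtain ⟨W, s, hs, r, hsplit, heq⟩ := h0c f.hom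
    obtain ⟨⟨ρ, hρ⟩⟩ := hsplit
    have hPW : P W := hretract W Y.obj Y.property r ρ hρ
    refine ⟨⟨W, hPW⟩, ObjectProperty.homMk s, ?_, ObjectProperty.homMk r, ?_, ObjectProperty.hom_ext _ heq⟩
    · exact ⟨fun {V} u v huv => ObjectProperty.hom_ext _ (hs.left_cancellation u.hom v.hom (congrArg (·.hom) huv))⟩
    · exact ⟨⟨⟨ObjectProperty.homMk ρ, ObjectProperty.hom_ext _ hρ⟩⟩⟩
end

section
/- Let C be an additive, idempotent complete category. Then the following are equivalent: (a) C has 0-kernels, has 0-cokernels, and every bimorphism in C is an isomorphism; (b) C is von Neumann regular, i.e. every morphism f : X ⟶ Y in C admits a morphism g : Y ⟶ X with f ∘ g ∘ f = f. -/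
open CategoryTheory Limits

universe v u

theorem stmt4 {C : Type u} [Category.{v} C] [Preadditive C] [HasFiniteBiproducts C]
    (hic : IsIdempotentComplete C) :
    (HasZeroKernels C ∧ HasZeroCokernels C ∧
      ∀ {X Y : C} (f : X ⟶ Y), Mono f → Epi f → IsIso f) ↔
    (∀ {X Y : C} (f : X ⟶ Y), ∃ g : Y ⟶ X, f ≫ g ≫ f = f) := by
  constructor
  · rintro ⟨hk, hc, hbi⟩ X Y f
    obtain ⟨Z, m, hmono, h, hse, hfac⟩ := hk f
    obtain ⟨W, s, hepi, r, hsm, hmfac⟩ := hc m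
    haveI : Mono m := hmono
    haveI : Epi s := hepi
    haveI : IsSplitEpi h := hse
    haveI : IsSplitMono r := hsm
    haveI : Mono s := by
      have : Mono (s ≫ r) := hmfac ▸ hmono
      exact mono_of_mono s r
    haveI : IsIso s := hbi s ‹Mono s› ‹Epi s›
    refine ⟨retraction r ≫ inv s ≫ section_ h, ?_⟩
    have h1 : r ≫ retraction r = 𝟙 W := IsSplitMono.id r
    have h2 : section_ h ≫ h = 𝟙 Z := IsSplitEpi.id h
    rw [hfac, hmfac]
    simp only [Category.assoc]
    slice_lhs 3 4 => rw [h1]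
    simp only [Category.id_comp, Category.assoc]
    slice_lhs 2 3 => rw [IsIso.hom_inv_id]
    simp only [Category.id_comp, Category.assoc]
    slice_lhs 2 3 => rw [h2]
    simp
  · intro hreg
    refine ⟨?_, ?_, ?_⟩
    · intro X Y f
      obtain ⟨g, hg⟩ := hreg f
      have hidem : (f ≫ g) ≫ (f ≫ g) = f ≫ g := by
        calc (f ≫ g) ≫ (f ≫ g) = (f ≫ g ≫ f) ≫ g := by simp only [Category.assoc]
        _ = f ≫ g := by rw [hg]
      obtain ⟨Z, i, e, hie, hei⟩ := hic.idempotents_split X (f ≫ g) hidem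
      haveI : IsSplitMono i := ⟨⟨⟨e, hie⟩⟩⟩
      haveI : IsSplitEpi e := ⟨⟨⟨i, hie⟩⟩⟩
      refine ⟨Z, i ≫ f, ?_, e, ‹IsSplitEpi e›, ?_⟩
      · have : Mono ((i ≫ f) ≫ g) := by
          rw [Category.assoc, ← hei, ← Category.assoc, hie, Category.id_comp]
          infer_instance
        exact mono_of_mono (i ≫ f) g
      · rw [← Category.assoc, hei, Category.assoc, hg]
    · intro X Y f
      obtain ⟨g, hg⟩ := hreg f
      have hidem : (g ≫ f) ≫ (g ≫ f) = g ≫ f := by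
        calc (g ≫ f) ≫ (g ≫ f) = g ≫ (f ≫ g ≫ f) := by simp only [Category.assoc]
        _ = g ≫ f := by rw [hg]
      obtain ⟨W, i, e, hie, hei⟩ := hic.idempotents_split Y (g ≫ f) hidem
      haveI : IsSplitMono i := ⟨⟨⟨e, hie⟩⟩⟩
      haveI : IsSplitEpi e := ⟨⟨⟨i, hie⟩⟩⟩
      refine ⟨W, f ≫ e, ?_, i, ‹IsSplitMono i›, ?_⟩
      · have : Epi (g ≫ (f ≫ e)) := by
          rw [← Category.assoc, ← hei, Category.assoc, hie, Category.comp_id]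
          infer_instance
        exact epi_of_epi g (f ≫ e)
      · rw [Category.assoc, hei]
        exact hg.symm
    · intro X Y f hm he
      obtain ⟨g, hg⟩ := hreg f
      haveI := hm; haveI := he
      refine ⟨g, ?_, ?_⟩
      · exact (cancel_mono f).mp (by rw [Category.assoc, hg, Category.id_comp])
      · exact (cancel_epi f).mp (by rw [hg, Category.comp_id])
end

section
/- Let C be a preadditive category. Then every morphism of C factors as an epimorphism followed by a monomorphism if and only if for every morphism f : X ⟶ Y of C there is a short exact sequence 0 → F_e → mr(f) → F₁ → 0 in Cᵒᵖ ⥤ AddCommGrp such that: (i) for every object W of C, every morphism F_e ⟶ y(W) is zero; and (ii) there exists a morphism g : Z ⟶ Y in C such that y(g) is a kernel of the composite y(Y) → mr(f) → F₁ (where y(Y) → mr(f) is the canonical cokernel projection). -/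
open CategoryTheory Limits
universe v u
set_option linter.unusedSectionVars false
set_option maxHeartbeats 1600000
variable {C : Type u} [Category.{v} C] [Preadditive C]

lemma aux_zero_apply {F G : Cᵒᵖ ⥤ AddCommGrpCat.{v}} (A : Cᵒᵖ) (x : F.obj A) :
    (0 : F ⟶ G).app A x = 0 := rfl

lemma aux_app_apply {F G : Cᵒᵖ ⥤ AddCommGrpCat.{v}} {u v : F ⟶ G} (h : u = v) (A : Cᵒᵖ)
    (x : F.obj A) : u.app A x = v.app A x := by rw [h]

lemma aux_comp_apply {F G H : Cᵒᵖ ⥤ AddCommGrpCat.{v}} (u : F ⟶ G) (v : G ⟶ H) (A : Cᵒᵖ)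
    (x : F.obj A) : (u ≫ v).app A x = v.app A (u.app A x) := rfl

lemma aux_y_app {X Y : C} (f : X ⟶ Y) (A : Cᵒᵖ) (k : A.unop ⟶ X) :
    (preadditiveYoneda.map f).app A k = k ≫ f := rfl

lemma aux_exact_app (S : ShortComplex (Cᵒᵖ ⥤ AddCommGrpCat.{v})) (hS : S.Exact) (A : Cᵒᵖ)
    (x : S.X₂.obj A) (hx : S.g.app A x = 0) : ∃ y, S.f.app A y = x := by
  have h := hS.map ((evaluation Cᵒᵖ AddCommGrpCat.{v}).obj A)
  rw [ShortComplex.ab_exact_iff] at h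
  exact h x hx

lemma aux_epi_app {F G : Cᵒᵖ ⥤ AddCommGrpCat.{v}} (u : F ⟶ G) [Epi u] (A : Cᵒᵖ) :
    Function.Surjective (u.app A) := by
  rw [← AddCommGrpCat.epi_iff_surjective]
  exact (NatTrans.epi_iff_epi_app u).1 inferInstance A

lemma aux_mono_app {F G : Cᵒᵖ ⥤ AddCommGrpCat.{v}} (u : F ⟶ G) [Mono u] (A : Cᵒᵖ) :
    Function.Injective (u.app A) := by
  rw [← AddCommGrpCat.mono_iff_injective]
  exact (NatTrans.mono_iff_mono_app u).1 inferInstance A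

lemma aux_coker_app {F G : Cᵒᵖ ⥤ AddCommGrpCat.{v}} (u : F ⟶ G) (A : Cᵒᵖ) (x : G.obj A)
    (hx : (cokernel.π u).app A x = 0) : ∃ y, u.app A y = x :=
  aux_exact_app (ShortComplex.mk u (cokernel.π u) (cokernel.condition u))
    (ShortComplex.exact_of_g_is_cokernel _ (cokernelIsCokernel u)) A x hx

lemma aux_kernel_fork_app {F G H : Cᵒᵖ ⥤ AddCommGrpCat.{v}} {ι : F ⟶ G} {v : G ⟶ H}
    (w : ι ≫ v = 0) (hl : IsLimit (KernelFork.ofι ι w)) (A : Cᵒᵖ) (x : G.obj A)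
    (hx : v.app A x = 0) : ∃ k, ι.app A k = x := by
  haveI : Mono ι := mono_of_isLimit_fork hl
  exact aux_exact_app (ShortComplex.mk ι v w)
    (ShortComplex.exact_of_f_is_kernel _ hl) A x hx

lemma aux_mono_y {Z Y : C} (m : Z ⟶ Y) [Mono m] : Mono (preadditiveYoneda.map m) := by
  rw [NatTrans.mono_iff_mono_app]
  intro A
  rw [AddCommGrpCat.mono_iff_injective]
  intro a b h
  exact (cancel_mono m).1 h

noncomputable def aux_fork_congr {𝒜 : Type*} [Category 𝒜] [Limits.HasZeroMorphisms 𝒜] {X Y Z : 𝒜}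
    {ι : X ⟶ Y} {v v' : Y ⟶ Z} (h : v' = v) (w : ι ≫ v = 0) (w' : ι ≫ v' = 0)
    (hl : IsLimit (KernelFork.ofι ι w')) : IsLimit (KernelFork.ofι ι w) := by
  subst h; exact hl

theorem stmt6 {C : Type u} [Category.{v} C] [Preadditive C] :
    (∀ {X Y : C} (f : X ⟶ Y), ∃ (Z : C) (e : X ⟶ Z) (m : Z ⟶ Y),
        Epi e ∧ Mono m ∧ f = e ≫ m) ↔
    (∀ {X Y : C} (f : X ⟶ Y),
      ∃ (Fe F₁ : Cᵒᵖ ⥤ AddCommGrpCat.{v}) (i : Fe ⟶ cokernel (preadditiveYoneda.map f))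
        (p : cokernel (preadditiveYoneda.map f) ⟶ F₁) (w : i ≫ p = 0),
        (ShortComplex.mk i p w).ShortExact ∧
        (∀ (W : C) (α : Fe ⟶ preadditiveYoneda.obj W), α = 0) ∧
        (∃ (Z : C) (g : Z ⟶ Y)
            (wg : preadditiveYoneda.map g ≫ (cokernel.π (preadditiveYoneda.map f) ≫ p) = 0),
          Nonempty (IsLimit (KernelFork.ofι (preadditiveYoneda.map g) wg)))) := by
  constructor
  · intro H X Y f
    obtain ⟨Z, e, m, he, hm, hf⟩ := H f
    subst hf
    haveI := he; haveI := hm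
    haveI := aux_mono_y m
    have hcomp : preadditiveYoneda.map (e ≫ m)
        = preadditiveYoneda.map e ≫ preadditiveYoneda.map m := preadditiveYoneda.map_comp e m
    have hw0 : preadditiveYoneda.map (e ≫ m) ≫ cokernel.π (preadditiveYoneda.map m) = 0 := by
      rw [hcomp, Category.assoc, cokernel.condition, comp_zero]
    set p : cokernel (preadditiveYoneda.map (e ≫ m)) ⟶ cokernel (preadditiveYoneda.map m) :=
      cokernel.desc _ (cokernel.π _) hw0 with hp
    have hπp : cokernel.π (preadditiveYoneda.map (e ≫ m)) ≫ p
        = cokernel.π (preadditiveYoneda.map m) := cokernel.π_desc _ _ _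
    haveI : Epi p := epi_of_epi_fac hπp
    have hφ0 : preadditiveYoneda.map e ≫ preadditiveYoneda.map m ≫
        cokernel.π (preadditiveYoneda.map (e ≫ m)) = 0 := by
      rw [← Category.assoc, ← hcomp, cokernel.condition]
    set φ : cokernel (preadditiveYoneda.map e) ⟶ cokernel (preadditiveYoneda.map (e ≫ m)) :=
      cokernel.desc _ (preadditiveYoneda.map m ≫ cokernel.π _) hφ0 with hφdef
    have hπφ : cokernel.π (preadditiveYoneda.map e) ≫ φ
        = preadditiveYoneda.map m ≫ cokernel.π (preadditiveYoneda.map (e ≫ m)) :=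
      cokernel.π_desc _ _ _
    have hφp : φ ≫ p = 0 := by
      rw [← cancel_epi (cokernel.π (preadditiveYoneda.map e)), comp_zero, ← Category.assoc, hπφ,
        Category.assoc, hπp, cokernel.condition]
    set φ' : cokernel (preadditiveYoneda.map e) ⟶ kernel p := kernel.lift p φ hφp with hφ'def
    have hφ'ι : φ' ≫ kernel.ι p = φ := kernel.lift_ι _ _ _
    have key : cokernel.π (preadditiveYoneda.map e) ≫ φ' ≫ kernel.ι p
        = preadditiveYoneda.map m ≫ cokernel.π (preadditiveYoneda.map (e ≫ m)) := by
      rw [hφ'ι, hπφ]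
    haveI hφ'epi : Epi φ' := by
      rw [NatTrans.epi_iff_epi_app]
      intro A
      rw [AddCommGrpCat.epi_iff_surjective]
      intro x
      obtain ⟨h, hh⟩ := aux_epi_app (cokernel.π (preadditiveYoneda.map (e ≫ m))) A
        ((kernel.ι p).app A x)
      have hx0 : (cokernel.π (preadditiveYoneda.map m)).app A h = 0 := by
        calc (cokernel.π (preadditiveYoneda.map m)).app A h
            = (cokernel.π (preadditiveYoneda.map (e ≫ m)) ≫ p).app A h :=
              (aux_app_apply hπp A h).symm
          _ = p.app A ((cokernel.π (preadditiveYoneda.map (e ≫ m))).app A h) :=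
              aux_comp_apply _ _ _ _
          _ = p.app A ((kernel.ι p).app A x) := by rw [hh]
          _ = (kernel.ι p ≫ p).app A x := (aux_comp_apply _ _ _ _).symm
          _ = (0 : kernel p ⟶ cokernel (preadditiveYoneda.map m)).app A x :=
              aux_app_apply (kernel.condition p) A x
          _ = 0 := rfl
      obtain ⟨k, hk⟩ := aux_coker_app (preadditiveYoneda.map m) A h hx0
      refine ⟨(cokernel.π (preadditiveYoneda.map e)).app A k, ?_⟩
      apply aux_mono_app (kernel.ι p) A
      calc (kernel.ι p).app A (φ'.app A ((cokernel.π (preadditiveYoneda.map e)).app A k))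
          = (φ' ≫ kernel.ι p).app A ((cokernel.π (preadditiveYoneda.map e)).app A k) :=
            (aux_comp_apply _ _ _ _).symm
        _ = (cokernel.π (preadditiveYoneda.map e) ≫ φ' ≫ kernel.ι p).app A k :=
            (aux_comp_apply _ _ _ _).symm
        _ = (preadditiveYoneda.map m ≫ cokernel.π (preadditiveYoneda.map (e ≫ m))).app A k :=
            aux_app_apply key A k
        _ = (cokernel.π (preadditiveYoneda.map (e ≫ m))).app A
              ((preadditiveYoneda.map m).app A k) := aux_comp_apply _ _ _ _
        _ = (kernel.ι p).app A x := by rw [hk, hh]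
    refine ⟨kernel p, cokernel (preadditiveYoneda.map m), kernel.ι p, p, kernel.condition p,
      ⟨ShortComplex.exact_of_f_is_kernel _ (kernelIsKernel p)⟩, ?_, Z, m, ?_, ?_⟩
    · intro W α
      obtain ⟨h, hh⟩ := preadditiveYoneda.map_surjective
        (cokernel.π (preadditiveYoneda.map e) ≫ φ' ≫ α)
      have h0 : e ≫ h = 0 := by
        apply preadditiveYoneda.map_injective
        rw [preadditiveYoneda.map_comp, hh, Functor.map_zero, ← Category.assoc,
          cokernel.condition, zero_comp]
      have h1 : h = 0 := (cancel_epi e).1 (by rw [h0, comp_zero])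
      have h2 : cokernel.π (preadditiveYoneda.map e) ≫ φ' ≫ α = 0 := by
        rw [← hh, h1, Functor.map_zero]
      rw [← cancel_epi φ', comp_zero]
      exact (cancel_epi (cokernel.π (preadditiveYoneda.map e))).1 (by rw [h2, comp_zero])
    · rw [hπp, cokernel.condition]
    · exact ⟨aux_fork_congr hπp.symm _ (cokernel.condition (preadditiveYoneda.map m))
        (Abelian.monoIsKernelOfCokernel
          (CokernelCofork.ofπ (cokernel.π (preadditiveYoneda.map m)) (cokernel.condition _))
          (cokernelIsCokernel (preadditiveYoneda.map m)))⟩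
  · intro H X Y f
    obtain ⟨Fe, F₁, i, p, w, hSE, hzero, Z, g, wg, ⟨hlim⟩⟩ := H f
    haveI := hSE.mono_f
    haveI : Mono (preadditiveYoneda.map g) := mono_of_isLimit_fork hlim
    haveI hg : Mono g := preadditiveYoneda.mono_of_mono_map inferInstance
    have wf : preadditiveYoneda.map f ≫ (cokernel.π (preadditiveYoneda.map f) ≫ p) = 0 := by
      rw [← Category.assoc, cokernel.condition, zero_comp]
    obtain ⟨l, hl⟩ := KernelFork.IsLimit.lift' hlim (preadditiveYoneda.map f) wf
    obtain ⟨e, he⟩ := preadditiveYoneda.map_surjective l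
    have hf : f = e ≫ g := by
      apply preadditiveYoneda.map_injective
      rw [preadditiveYoneda.map_comp, he]
      exact hl.symm
    -- β : y Z ⟶ Fe
    have wβ : (preadditiveYoneda.map g ≫ cokernel.π (preadditiveYoneda.map f))
        ≫ (ShortComplex.mk i p w).g = 0 := by
      dsimp only [ShortComplex.mk]
      rw [Category.assoc]
      exact wg
    set β := hSE.exact.lift (preadditiveYoneda.map g ≫ cokernel.π (preadditiveYoneda.map f)) wβ
      with hβdef
    have hβ : β ≫ i = preadditiveYoneda.map g ≫ cokernel.π (preadditiveYoneda.map f) :=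
      hSE.exact.lift_f _ _
    haveI hβepi : Epi β := by
      rw [NatTrans.epi_iff_epi_app]
      intro A
      rw [AddCommGrpCat.epi_iff_surjective]
      intro t
      obtain ⟨h', hh'⟩ := aux_epi_app (cokernel.π (preadditiveYoneda.map f)) A (i.app A t)
      have h0 : (cokernel.π (preadditiveYoneda.map f) ≫ p).app A h' = 0 := by
        calc (cokernel.π (preadditiveYoneda.map f) ≫ p).app A h'
            = p.app A ((cokernel.π (preadditiveYoneda.map f)).app A h') := aux_comp_apply _ _ _ _
          _ = p.app A (i.app A t) := by rw [hh']
          _ = (i ≫ p).app A t := (aux_comp_apply _ _ _ _).symm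
          _ = (0 : Fe ⟶ F₁).app A t := aux_app_apply w A t
          _ = 0 := rfl
      obtain ⟨k, hk⟩ := aux_kernel_fork_app wg hlim A h' h0
      refine ⟨k, aux_mono_app i A ?_⟩
      calc i.app A (β.app A k)
          = (β ≫ i).app A k := (aux_comp_apply _ _ _ _).symm
        _ = (preadditiveYoneda.map g ≫ cokernel.π (preadditiveYoneda.map f)).app A k :=
            aux_app_apply hβ A k
        _ = (cokernel.π (preadditiveYoneda.map f)).app A ((preadditiveYoneda.map g).app A k) :=
            aux_comp_apply _ _ _ _
        _ = i.app A t := by rw [hk, hh']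
    refine ⟨Z, e, g, ?_, hg, hf⟩
    apply Preadditive.epi_of_cancel_zero
    intro W h e0
    have hker : kernel.ι β ≫ preadditiveYoneda.map h = 0 := by
      ext A x
      have h1 : (cokernel.π (preadditiveYoneda.map f)).app A
          (((kernel.ι β).app A x) ≫ g) = 0 := by
        calc (cokernel.π (preadditiveYoneda.map f)).app A (((kernel.ι β).app A x) ≫ g)
            = (cokernel.π (preadditiveYoneda.map f)).app A
                ((preadditiveYoneda.map g).app A ((kernel.ι β).app A x)) := rfl
          _ = (preadditiveYoneda.map g ≫ cokernel.π (preadditiveYoneda.map f)).app A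
                ((kernel.ι β).app A x) := (aux_comp_apply _ _ _ _).symm
          _ = (β ≫ i).app A ((kernel.ι β).app A x) := (aux_app_apply hβ A _).symm
          _ = i.app A ((kernel.ι β ≫ β).app A x) := rfl
          _ = i.app A ((0 : kernel β ⟶ Fe).app A x) := by rw [kernel.condition]
          _ = 0 := by rw [aux_zero_apply, map_zero]
      obtain ⟨u', hu'⟩ := aux_coker_app (preadditiveYoneda.map f) A ((kernel.ι β).app A x ≫ g) h1
      have hu'' : u' ≫ e ≫ g = ((kernel.ι β).app A x) ≫ g := by
        rw [← hf]
        exact hu'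
      have hue : (u' : A.unop ⟶ X) ≫ e = (kernel.ι β).app A x := by
        exact (cancel_mono g).1 ((Category.assoc (u' : A.unop ⟶ X) e g).trans hu'')
      calc (show A.unop ⟶ W from (kernel.ι β ≫ preadditiveYoneda.map h).app A x)
          = ((kernel.ι β).app A x) ≫ h := rfl
        _ = ((u' : A.unop ⟶ X) ≫ e) ≫ h := by rw [hue]
        _ = (u' : A.unop ⟶ X) ≫ (e ≫ h) := Category.assoc _ _ _
        _ = 0 := by rw [e0]; exact comp_zero
        _ = (show A.unop ⟶ W from (0 : kernel β ⟶ preadditiveYoneda.obj W).app A x) := rfl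
    have hα : Abelian.epiDesc β (preadditiveYoneda.map h) hker = 0 := hzero W _
    have : preadditiveYoneda.map h = 0 := by
      rw [← Abelian.comp_epiDesc β (preadditiveYoneda.map h) hker, hα, comp_zero]
    apply preadditiveYoneda.map_injective
    rw [this, Functor.map_zero]
end

section
/- Let C be an abelian category, let f : X ⟶ Y be an epimorphism in C and let g : Z ⟶ W be a monomorphism in C. Then every morphism mr(f) ⟶ mr(g) in the functor category Cᵒᵖ ⥤ AddCommGrp is zero. -/
open CategoryTheory Limits

universe v u

theorem stmt7 {C : Type u} [Category.{v} C] [Abelian C] {X Y Z W : C}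
    (f : X ⟶ Y) (g : Z ⟶ W) (hf : Epi f) (hg : Mono g)
    (α : cokernel (preadditiveYoneda.map f) ⟶ cokernel (preadditiveYoneda.map g)) :
    α = 0 := by
  haveI := hf
  haveI := hg
  haveI : StrongEpi f := strongEpi_of_epi f
  haveI hmono : Mono (preadditiveYoneda.map g) := by
    haveI : ∀ A : Cᵒᵖ, Mono ((preadditiveYoneda.map g).app A) := by
      intro A
      rw [AddCommGrpCat.mono_iff_injective]
      intro a b h
      exact (cancel_mono g).1 h
    exact NatTrans.mono_of_mono_app _
  rw [← cancel_epi (cokernel.π (preadditiveYoneda.map f))]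
  have hβ : preadditiveYoneda.map f ≫ cokernel.π (preadditiveYoneda.map f) ≫ α = 0 := by
    rw [cokernel.condition_assoc, zero_comp]
  have hepi : Epi ((cokernel.π (preadditiveYoneda.map g)).app (Opposite.op Y)) :=
    inferInstance
  obtain ⟨(w : Y ⟶ W), hw⟩ := (AddCommGrpCat.epi_iff_surjective _).1 hepi
    ((cokernel.π (preadditiveYoneda.map f) ≫ α).app (Opposite.op Y) (𝟙 Y))
  have hfact : cokernel.π (preadditiveYoneda.map f) ≫ α =
      preadditiveYoneda.map w ≫ cokernel.π (preadditiveYoneda.map g) := by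
    ext A x
    have h1 := ConcreteCategory.congr_hom
      ((cokernel.π (preadditiveYoneda.map f) ≫ α).naturality x.op) (𝟙 Y)
    have h2 := ConcreteCategory.congr_hom
      ((cokernel.π (preadditiveYoneda.map g)).naturality x.op) w
    simp only [NatTrans.comp_app, comp_apply]
    calc (cokernel.π (preadditiveYoneda.map f) ≫ α).app A x
        = (cokernel.π (preadditiveYoneda.map f) ≫ α).app A
            ((preadditiveYoneda.obj Y).map x.op (𝟙 Y)) := by
          congr 1; exact (Category.comp_id x).symm
      _ = (cokernel (preadditiveYoneda.map g)).map x.op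
            ((cokernel.π (preadditiveYoneda.map f) ≫ α).app (Opposite.op Y) (𝟙 Y)) := h1
      _ = (cokernel (preadditiveYoneda.map g)).map x.op
            ((cokernel.π (preadditiveYoneda.map g)).app (Opposite.op Y) w) := by rw [hw]
      _ = (cokernel.π (preadditiveYoneda.map g)).app A
            ((preadditiveYoneda.obj W).map x.op w) := h2.symm
      _ = (cokernel.π (preadditiveYoneda.map g)).app A
            ((preadditiveYoneda.map w).app A x) := rfl
  have hzero : preadditiveYoneda.map (f ≫ w) ≫ cokernel.π (preadditiveYoneda.map g) = 0 := by
    rw [preadditiveYoneda.map_comp, Category.assoc, ← hfact, hβ]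
  obtain ⟨u, hu⟩ := preadditiveYoneda.map_surjective
    (Abelian.monoLift (preadditiveYoneda.map g) (preadditiveYoneda.map (f ≫ w)) hzero)
  have hcomm : f ≫ w = u ≫ g := by
    apply preadditiveYoneda.map_injective
    rw [preadditiveYoneda.map_comp (f := u), hu]
    exact (Abelian.monoLift_comp _ _ _).symm
  have sq : CommSq u f g w := ⟨hcomm.symm⟩
  have hwlift : w = sq.lift ≫ g := sq.fac_right.symm
  rw [hfact, hwlift, preadditiveYoneda.map_comp, Category.assoc, cokernel.condition,
    comp_zero, comp_zero]
end

section
/- Let C be a 0-abelian category. Then for every morphism f : X ⟶ Y of C there exist a bimorphism g : X' ⟶ Y' in C and an object Z of C such that mr(f) is isomorphic to the biproduct mr(g) ⊕ y(Z) in the functor category Cᵒᵖ ⥤ AddCommGrp. -/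
open CategoryTheory Limits

universe v u

instance {C : Type*} [Category C] [Preadditive C] :
    Functor.Additive (preadditiveYoneda (C := C)) where
  map_add := by
    intro X Y f g
    ext U x
    simp only [NatTrans.app_add]
    rw [AddCommGrpCat.hom_add, AddMonoidHom.add_apply]
    show x ≫ (f + g) = x ≫ f + x ≫ g
    exact Preadditive.comp_add _ _ _ _ _ _

noncomputable def cokernelCompInlIso {A : Type*} [Category A] [Abelian A] {P Q : A} (u : P ⟶ Q)
    (R : A) : cokernel (u ≫ (biprod.inl : Q ⟶ Q ⊞ R)) ≅ cokernel u ⊞ R where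
  hom := cokernel.desc _ (biprod.map (cokernel.π u) (𝟙 R)) (by
    rw [Category.assoc, biprod.inl_map, ← Category.assoc, cokernel.condition, zero_comp])
  inv := biprod.desc
    (cokernel.desc u (biprod.inl ≫ cokernel.π _) (by
      rw [← Category.assoc]; exact cokernel.condition _))
    (biprod.inr ≫ cokernel.π _)
  hom_inv_id := by
    apply coequalizer.hom_ext
    simp only [cokernel.π_desc_assoc, Category.comp_id]
    apply biprod.hom_ext' <;> simp
  inv_hom_id := by
    apply biprod.hom_ext' <;> simp only [biprod.inl_desc_assoc, biprod.inr_desc_assoc,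
      Category.assoc, cokernel.π_desc, Category.comp_id]
    · apply coequalizer.hom_ext
      simp
    · simp

theorem stmt8 {C : Type u} [Category.{v} C] [Preadditive C] [HasFiniteBiproducts C]
    (h0k : HasZeroKernels C) (h0c : HasZeroCokernels C) {X Y : C} (f : X ⟶ Y) :
    ∃ (X' Y' : C) (g : X' ⟶ Y') (Z : C), Mono g ∧ Epi g ∧
      Nonempty (cokernel (preadditiveYoneda.map f) ≅
        cokernel (preadditiveYoneda.map g) ⊞ preadditiveYoneda.obj Z) := by
  obtain ⟨W, s, hse, r, hrsm, hfsr⟩ := h0c f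
  obtain ⟨X', g, hgm, h, hhse, hshg⟩ := h0k s
  haveI := hrsm
  haveI := hhse
  haveI := hgm
  haveI : Epi g := by
    rw [hshg] at hse
    exact epi_of_epi h g
  set ρ : Y ⟶ W := retraction r with hρ
  have hrρ : r ≫ ρ = 𝟙 W := IsSplitMono.id r
  set e : Y ⟶ Y := 𝟙 Y - ρ ≫ r with he
  obtain ⟨Z, g2, hg2m, h2, hh2se, heq⟩ := h0k e
  haveI := hg2m
  haveI := hh2se
  have hee : e ≫ e = e := by
    simp only [he, Preadditive.sub_comp, Preadditive.comp_sub, Category.id_comp,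
      Category.comp_id, Category.assoc]
    rw [reassoc_of% hrρ]
    abel
  have hg2h2 : g2 ≫ h2 = 𝟙 Z := by
    have h1 : h2 ≫ (g2 ≫ h2) ≫ g2 = h2 ≫ 𝟙 Z ≫ g2 := by
      rw [heq] at hee
      simpa only [Category.assoc, Category.id_comp] using hee
    rw [cancel_epi h2, cancel_mono g2] at h1
    exact h1
  have hrh2 : r ≫ h2 = 0 := by
    have : r ≫ h2 ≫ g2 = 0 ≫ g2 := by
      rw [← heq, zero_comp]
      simp only [he, Preadditive.comp_sub, Category.comp_id, ← Category.assoc, hrρ,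
        Category.id_comp, sub_self]
    rwa [← Category.assoc, cancel_mono g2] at this
  have hg2ρ : g2 ≫ ρ = 0 := by
    have : h2 ≫ g2 ≫ ρ = h2 ≫ 0 := by
      rw [comp_zero, ← Category.assoc, ← heq]
      simp only [he, Preadditive.sub_comp, Category.id_comp, Category.assoc, hrρ,
        Category.comp_id, sub_self]
    rwa [cancel_epi h2] at this
  have hsum : ρ ≫ r + h2 ≫ g2 = 𝟙 Y := by
    rw [← heq, he]; abel
  -- pass to the functor category
  let yo := (preadditiveYoneda : C ⥤ Cᵒᵖ ⥤ AddCommGrpCat.{v})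
  haveI : Epi (yo.map h) := by
    haveI : IsSplitEpi (yo.map h) :=
      ⟨⟨⟨yo.map (section_ h), by rw [← yo.map_comp, IsSplitEpi.id, yo.map_id]⟩⟩⟩
    infer_instance
  haveI : yo.Additive := inferInstanceAs (Functor.Additive preadditiveYoneda)
  let ψ : yo.obj Y ≅ yo.obj W ⊞ yo.obj Z :=
    { hom := biprod.lift (yo.map ρ) (yo.map h2)
      inv := biprod.desc (yo.map r) (yo.map g2)
      hom_inv_id := by
        rw [biprod.lift_desc, ← yo.map_comp, ← yo.map_comp, ← yo.map_add, hsum, yo.map_id]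
      inv_hom_id := by
        apply biprod.hom_ext' <;> apply biprod.hom_ext <;>
          simp only [Category.assoc, biprod.inl_desc_assoc, biprod.inr_desc_assoc,
            biprod.lift_fst, biprod.lift_snd, Category.id_comp, ← yo.map_comp,
            hrρ, hrh2, hg2ρ, hg2h2, yo.map_id, Functor.map_zero,
            biprod.inl_fst, biprod.inl_snd, biprod.inr_fst, biprod.inr_snd] }
  have hψr : yo.map r ≫ ψ.hom = biprod.inl := by
    apply biprod.hom_ext <;>
      simp only [ψ, Category.assoc, biprod.lift_fst, biprod.lift_snd, ← yo.map_comp, hrρ,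
        hrh2, yo.map_id, Functor.map_zero, biprod.inl_fst, biprod.inl_snd]
  haveI : IsIso ψ.hom := ⟨ψ.inv, ψ.hom_inv_id, ψ.inv_hom_id⟩
  refine ⟨X', W, g, Z, hgm, inferInstance, ⟨?_⟩⟩
  calc cokernel (yo.map f)
      ≅ cokernel (yo.map h ≫ yo.map (g ≫ r)) := cokernelIsoOfEq (by
        rw [← yo.map_comp, hfsr, hshg, Category.assoc])
    _ ≅ cokernel (yo.map (g ≫ r)) := cokernelEpiComp _ _
    _ ≅ cokernel ((yo.map g ≫ yo.map r) ≫ ψ.hom) := (cokernelCompIsIso _ _).symm ≪≫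
        cokernelIsoOfEq (by rw [yo.map_comp])
    _ ≅ cokernel (yo.map g ≫ (biprod.inl : yo.obj W ⟶ yo.obj W ⊞ yo.obj Z)) :=
        cokernelIsoOfEq (by rw [Category.assoc, hψr])
    _ ≅ cokernel (yo.map g) ⊞ yo.obj Z := cokernelCompInlIso _ _
end

section
/- Let B be a category with enough injectives that has 0-cokernels. Then every object X of B admits a bimorphism X ⟶ I with I an injective object of B. -/
open CategoryTheory Limits

universe v u

theorem stmt9 {B : Type u} [Category.{v} B] [EnoughInjectives B]
    (h : HasZeroCokernels B) (X : B) :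
    ∃ (I : B) (i : X ⟶ I), Injective I ∧ Mono i ∧ Epi i := by
  obtain ⟨J, f, hJ, hf⟩ : ∃ (J : B) (f : X ⟶ J), Injective J ∧ Mono f :=
    ⟨Injective.under X, Injective.ι X, inferInstance, inferInstance⟩
  obtain ⟨W, s, hs, r, hr, hfr⟩ := h f
  have hsmono : Mono s := by
    constructor
    intro A g g' hgg'
    have : g ≫ f = g' ≫ f := by rw [hfr, ← Category.assoc, hgg', Category.assoc]
    exact (cancel_mono f).mp this
  have hW : Injective W := by
    constructor
    intro A A' g m hm
    have : Injective J := hJ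
    obtain ⟨e, he⟩ := this.factors (g ≫ r) m
    refine ⟨e ≫ @retraction _ _ _ _ r hr, ?_⟩
    have := @IsSplitMono.id _ _ _ _ r hr
    rw [← Category.assoc, he, Category.assoc, this, Category.comp_id]
  exact ⟨W, s, hW, hsmono, hs⟩
end

section
/- Let B be an arbitrary category. The following are equivalent: (i) every object of B admits a bimorphism into an injective object; (ii) B has enough injectives, and every object X of B admits a morphism η : X ⟶ I with I injective such that for every morphism f : X ⟶ J with J injective there exists a unique morphism g : I ⟶ J with f = g ∘ η (i.e. the full subcategory of injective objects is reflective with pointwise reflections η). -/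
open CategoryTheory Limits

universe v u

theorem stmt10 {B : Type u} [Category.{v} B] :
    (∀ X : B, ∃ (I : B) (i : X ⟶ I), Injective I ∧ Mono i ∧ Epi i) ↔
    (EnoughInjectives B ∧
      ∀ X : B, ∃ (I : B) (η : X ⟶ I), Injective I ∧
        ∀ (J : B) (f : X ⟶ J), Injective J → ∃! g : I ⟶ J, f = η ≫ g) := by
  constructor
  · intro h
    constructor
    · exact ⟨fun X => by
        obtain ⟨I, i, hI, hm, he⟩ := h X
        exact ⟨⟨I, hI, i, hm⟩⟩⟩
    · intro X
      obtain ⟨I, i, hI, hm, he⟩ := h X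
      refine ⟨I, i, hI, fun J f hJ => ?_⟩
      haveI := hI; haveI := hJ; haveI := hm; haveI := he
      refine ⟨Injective.factorThru f i, (Injective.comp_factorThru f i).symm, ?_⟩
      intro g hg
      apply he.left_cancellation
      rw [← hg, Injective.comp_factorThru]
  · rintro ⟨hE, h⟩ X
    obtain ⟨I, η, hI, huniv⟩ := h X
    refine ⟨I, η, hI, ?_, ?_⟩
    · obtain ⟨p⟩ := hE.presentation X
      obtain ⟨g, hg, -⟩ := huniv p.J p.f p.injective
      have hm : Mono (η ≫ g) := hg ▸ p.mono
      exact mono_of_mono η g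
    · constructor
      intro Z u v huv
      obtain ⟨p⟩ := hE.presentation Z
      haveI := p.mono
      have h1 : η ≫ (u ≫ p.f) = η ≫ (v ≫ p.f) := by
        rw [← Category.assoc, ← Category.assoc, huv]
      obtain ⟨g, hg, hu⟩ := huniv p.J (η ≫ u ≫ p.f) p.injective
      have e1 : u ≫ p.f = v ≫ p.f := by
        rw [hu (u ≫ p.f) rfl, hu (v ≫ p.f) h1]
      exact (cancel_mono p.f).mp e1
end

section
/- Let B be a category, let ε : P ⟶ X be a bimorphism with P a projective object of B, and let η : Y ⟶ I be a bimorphism with I an injective object of B. Then for every morphism g : P ⟶ Y there exists a unique morphism h : X ⟶ I such that h ∘ ε = η ∘ g. (Consequently the assignment g ↦ h is a bijection between Hom(P, Y) and Hom(X, I), which is the pointwise form of the adjunction between the injective-reflection and projective-coreflection functors.) -/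
open CategoryTheory Limits

universe v u

theorem stmt11 {B : Type u} [Category.{v} B] {P X Y I : B}
    (ε : P ⟶ X) (η : Y ⟶ I) (hP : Projective P) (hI : Injective I)
    (hεm : Mono ε) (hεe : Epi ε) (hηm : Mono η) (hηe : Epi η) (g : P ⟶ Y) :
    ∃! h : X ⟶ I, ε ≫ h = g ≫ η := by
  exact ⟨Injective.factorThru (g ≫ η) ε, Injective.comp_factorThru _ _,
    fun h hh => by rw [← cancel_epi ε, hh, Injective.comp_factorThru]⟩
end

section
/- Let C be a preadditive category, let X and Y be objects of C, let ε : P ⟶ X be a bimorphism with P projective, and let η : Y ⟶ I be a bimorphism with I injective. Then the quotient abelian group Hom(X, I) / image( Hom(X, Y) → Hom(X, I), u ↦ η ∘ u ) is isomorphic to the quotient abelian group Hom(P, Y) / image( Hom(X, Y) → Hom(P, Y), u ↦ u ∘ ε ). (These quotients are the two constructions E_C(X,Y) of the extension group of the paper, computed via an injective coresolution of Y and via a projective resolution of X respectively.) -/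
open CategoryTheory Limits

universe v u

theorem stmt12 {C : Type u} [Category.{v} C] [Preadditive C] {P X Y I : C}
    (ε : P ⟶ X) (η : Y ⟶ I) (hP : Projective P) (hI : Injective I)
    (hεm : Mono ε) (hεe : Epi ε) (hηm : Mono η) (hηe : Epi η) :
    Nonempty (
      ((X ⟶ I) ⧸ AddMonoidHom.range
        (AddMonoidHom.mk' (fun u : X ⟶ Y => u ≫ η)
          (fun a b => by simp [Preadditive.add_comp]))) ≃+
      ((P ⟶ Y) ⧸ AddMonoidHom.range
        (AddMonoidHom.mk' (fun u : X ⟶ Y => ε ≫ u)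
          (fun a b => by simp [Preadditive.comp_add])))) := by
  haveI := hεm; haveI := hεe; haveI := hηm; haveI := hηe; haveI := hP; haveI := hI
  let φ : (X ⟶ I) → (P ⟶ Y) := fun f => Projective.factorThru (ε ≫ f) η
  let ψ : (P ⟶ Y) → (X ⟶ I) := fun g => Injective.factorThru (g ≫ η) ε
  have hφ : ∀ f, φ f ≫ η = ε ≫ f := fun f => Projective.factorThru_comp _ _
  have hψ : ∀ g, ε ≫ ψ g = g ≫ η := fun g => Injective.comp_factorThru _ _
  let e : (X ⟶ I) ≃+ (P ⟶ Y) :=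
    { toFun := φ, invFun := ψ,
      left_inv := fun f => by
        apply (cancel_epi ε).1
        rw [hψ, hφ],
      right_inv := fun g => by
        apply (cancel_mono η).1
        rw [hφ, hψ],
      map_add' := fun a b => by
        apply (cancel_mono η).1
        rw [Preadditive.add_comp, hφ, hφ, hφ, Preadditive.comp_add] }
  refine ⟨QuotientAddGroup.congr _ _ e ?_⟩
  ext g
  simp only [AddSubgroup.mem_map, AddMonoidHom.mem_range, AddMonoidHom.mk'_apply]
  constructor
  · rintro ⟨f, ⟨u, rfl⟩, rfl⟩
    refine ⟨u, ?_⟩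
    apply (cancel_mono η).1
    show _ = φ (u ≫ η) ≫ η
    rw [hφ]
    simp
  · rintro ⟨u, rfl⟩
    refine ⟨u ≫ η, ⟨u, rfl⟩, ?_⟩
    show φ (u ≫ η) = ε ≫ u
    apply (cancel_mono η).1
    rw [hφ]
    simp
end

section
/- Let C be a 0-abelian category with enough injectives. For each object X of C choose a bimorphism η_X : X ⟶ I_X with I_X injective (such exist). For a morphism f : X ⟶ Y there is a unique morphism f_I : I_X ⟶ I_Y with f_I ∘ η_X = η_Y ∘ f, and: (a) if f is a monomorphism, then f_I is a split monomorphism; (b) if f is an epimorphism, then f_I is a split epimorphism. -/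
open CategoryTheory Limits

universe v u

theorem stmt13 {C : Type u} [Category.{v} C] [Preadditive C] [HasFiniteBiproducts C]
    (h0k : HasZeroKernels C) (h0c : HasZeroCokernels C) [EnoughInjectives C]
    {X Y IX IY : C} (ηX : X ⟶ IX) (ηY : Y ⟶ IY)
    (hIX : Injective IX) (hIY : Injective IY)
    (hXm : Mono ηX) (hXe : Epi ηX) (hYm : Mono ηY) (hYe : Epi ηY)
    (f : X ⟶ Y) :
    (∃! fI : IX ⟶ IY, ηX ≫ fI = f ≫ ηY) ∧
    ∀ fI : IX ⟶ IY, ηX ≫ fI = f ≫ ηY →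
      (Mono f → IsSplitMono fI) ∧ (Epi f → IsSplitEpi fI) := by
  haveI := hXm; haveI := hXe; haveI := hYm; haveI := hYe
  haveI := hIX; haveI := hIY
  constructor
  · refine ⟨Injective.factorThru (f ≫ ηY) ηX, Injective.comp_factorThru _ _, ?_⟩
    intro g hg
    rw [← cancel_epi ηX, hg, Injective.comp_factorThru]
  · intro fI hfI
    constructor
    · intro hf
      haveI := hf
      refine ⟨⟨Injective.factorThru (Injective.factorThru ηX f) ηY, ?_⟩⟩
      rw [← cancel_epi ηX, ← Category.assoc, hfI, Category.assoc,
        Injective.comp_factorThru, Injective.comp_factorThru, Category.comp_id]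
    · intro hf
      haveI := hf
      haveI hEfI : Epi fI := by
        have : Epi (ηX ≫ fI) := by rw [hfI]; exact epi_comp f ηY
        exact epi_of_epi ηX fI
      obtain ⟨Z, g, hgm, h, hh, hfact⟩ := h0k fI
      haveI := hgm
      haveI : Epi g := by rw [hfact] at hEfI; exact epi_of_epi h g
      refine ⟨⟨Injective.factorThru (section_ h) g, ?_⟩⟩
      rw [← cancel_epi g, ← Category.assoc, Injective.comp_factorThru,
        Category.comp_id, hfact, ← Category.assoc, IsSplitEpi.id, Category.id_comp]
end

section
/- (Not so long exact sequence.) Let C be a 0-abelian category with enough injectives. For each object X choose a bimorphism η_X : X ⟶ I_X with I_X injective, set E(-,X) := mr(η_X) in Cᵒᵖ ⥤ AddCommGrp, and let ψ_X : y(I_X) ⟶ E(-,X) be the canonical cokernel projection. Let f : X ⟶ Y be a bimorphism in C, let f_I : I_X ⟶ I_Y be the unique morphism with f_I ∘ η_X = η_Y ∘ f, and let E(-,f) : E(-,X) ⟶ E(-,Y) be the morphism induced on cokernels. Then f_I is an isomorphism, and the sequence 0 → y(X) → y(Y) → E(-,X) → E(-,Y) → 0 is exact in Cᵒᵖ ⥤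 AddCommGrp, where the first map is y(f), the connecting map is ψ_X ∘ y(f_I)⁻¹ ∘ y(η_Y), and the last map is E(-,f). -/
open CategoryTheory Limits

universe v u

/-- The additive Yoneda embedding sends monomorphisms to monomorphisms. -/
lemma aux_yoneda_map_mono {C : Type u} [Category.{v} C] [Preadditive C] {A B : C}
    (h : A ⟶ B) [Mono h] : Mono (preadditiveYoneda.map h) := by
  haveI : ∀ (A' : Cᵒᵖ), Mono ((preadditiveYoneda.map h).app A') := by
    intro A'
    rw [AddCommGrpCat.mono_iff_injective]
    intro a b hab
    simp at hab
    exact (cancel_mono h).1 hab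
  exact NatTrans.mono_of_mono_app _

section Aux

open CategoryTheory.Abelian CategoryTheory.Abelian.Pseudoelement
open scoped Pseudoelement

universe v₂ u₂

variable {D : Type u₂} [Category.{v₂} D] [Abelian D]

lemma aux_id_apply {P : D} (a : P) : (𝟙 P : P ⟶ P) a = a :=
  Quotient.inductionOn a fun a' => by
    rw [pseudoApply_mk']
    apply Quotient.sound
    refine ⟨a'.1, 𝟙 _, 𝟙 _, inferInstance, inferInstance, ?_⟩
    simp

lemma aux_exact₁ {P Q I J : D} (f₁ : P ⟶ Q) (m : Q ⟶ J) [Mono m] (n : P ⟶ I)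
    (φ : I ⟶ J) [IsIso φ] (hcomm : f₁ ≫ m = n ≫ φ)
    (w : f₁ ≫ (m ≫ inv φ ≫ cokernel.π n) = 0) :
    (ShortComplex.mk f₁ (m ≫ inv φ ≫ cokernel.π n) w).Exact := by
  apply exact_of_pseudo_exact
  intro b hb
  have hb' : (cokernel.π n) ((inv φ) ((m : Q ⟶ J) b)) = 0 := by
    rw [← Pseudoelement.comp_apply, ← Pseudoelement.comp_apply]
    exact hb
  obtain ⟨a, ha⟩ := pseudo_exact_of_exact (ShortComplex.exact_cokernel n) _ hb'
  have ha' : (n : P ⟶ I) a = (inv φ) ((m : Q ⟶ J) b) := ha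
  refine ⟨a, pseudo_injective_of_mono m ?_⟩
  show (m : Q ⟶ J) ((f₁ : P ⟶ Q) a) = (m : Q ⟶ J) b
  rw [← Pseudoelement.comp_apply, hcomm, Pseudoelement.comp_apply, ha',
    ← Pseudoelement.comp_apply, IsIso.inv_hom_id, aux_id_apply]

lemma aux_exact₂ {P Q I J : D} (f₁ : P ⟶ Q) (m : Q ⟶ J) (n : P ⟶ I)
    (φ : I ⟶ J) [IsIso φ] (h : n ≫ φ = f₁ ≫ m)
    (w : (m ≫ inv φ ≫ cokernel.π n) ≫ cokernel.map n m f₁ φ h = 0) :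
    (ShortComplex.mk (m ≫ inv φ ≫ cokernel.π n) (cokernel.map n m f₁ φ h) w).Exact := by
  have hπc : cokernel.π n ≫ cokernel.map n m f₁ φ h = φ ≫ cokernel.π m :=
    cokernel.π_desc _ _ _
  apply exact_of_pseudo_exact
  intro b hb
  obtain ⟨t, ht⟩ := pseudo_surjective_of_epi (cokernel.π n) b
  have h3 : (cokernel.π m) ((φ : I ⟶ J) t) = 0 := by
    rw [← Pseudoelement.comp_apply, ← hπc, Pseudoelement.comp_apply, ht]
    exact hb
  obtain ⟨s, hs⟩ := pseudo_exact_of_exact (ShortComplex.exact_cokernel m) _ h3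
  have hs' : (m : Q ⟶ J) s = (φ : I ⟶ J) t := hs
  refine ⟨s, ?_⟩
  show (m ≫ inv φ ≫ cokernel.π n : Q ⟶ cokernel n) s = b
  rw [Pseudoelement.comp_apply, hs', Pseudoelement.comp_apply,
    ← Pseudoelement.comp_apply φ (inv φ) t, IsIso.hom_inv_id, aux_id_apply]
  exact ht

end Aux

/-- The "not so long exact sequence" induced by a bimorphism in a `0`-abelian category
with enough injectives. -/
theorem stmt14 {C : Type u} [Category.{v} C] [Preadditive C] [HasFiniteBiproducts C]
    (h0k : HasZeroKernels C) (h0c : HasZeroCokernels C) [EnoughInjectives C]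
    {X Y IX IY : C} (ηX : X ⟶ IX) (ηY : Y ⟶ IY)
    (hIX : Injective IX) (hIY : Injective IY)
    (hXm : Mono ηX) (hXe : Epi ηX) (hYm : Mono ηY) (hYe : Epi ηY)
    (f : X ⟶ Y) (hfm : Mono f) (hfe : Epi f)
    (fI : IX ⟶ IY) (hfI : ηX ≫ fI = f ≫ ηY) :
    ∃ _ : IsIso fI,
      Mono (preadditiveYoneda.map f) ∧
      (ShortComplex.mk (preadditiveYoneda.map f)
        (preadditiveYoneda.map ηY ≫ inv (preadditiveYoneda.map fI) ≫
          cokernel.π (preadditiveYoneda.map ηX))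
        (by
          have h : preadditiveYoneda.map f ≫ preadditiveYoneda.map ηY =
              preadditiveYoneda.map ηX ≫ preadditiveYoneda.map fI := by
            rw [← Functor.map_comp, ← Functor.map_comp, hfI]
          rw [← Category.assoc, h, Category.assoc, IsIso.hom_inv_id_assoc,
            cokernel.condition])).Exact ∧
      (ShortComplex.mk
        (preadditiveYoneda.map ηY ≫ inv (preadditiveYoneda.map fI) ≫
          cokernel.π (preadditiveYoneda.map ηX))
        (cokernel.map (preadditiveYoneda.map ηX) (preadditiveYoneda.map ηY)
          (preadditiveYoneda.map f) (preadditiveYoneda.map fI)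
          (by rw [← Functor.map_comp, ← Functor.map_comp, hfI]))
        (by simp)).Exact ∧
      Epi (cokernel.map (preadditiveYoneda.map ηX) (preadditiveYoneda.map ηY)
        (preadditiveYoneda.map f) (preadditiveYoneda.map fI)
        (by rw [← Functor.map_comp, ← Functor.map_comp, hfI])) := by
  haveI := hIX; haveI := hIY
  haveI := hXm; haveI := hXe; haveI := hYm; haveI := hYe; haveI := hfm; haveI := hfe
  haveI : Mono (f ≫ ηY) := mono_comp f ηY
  haveI : Epi (f ≫ ηY) := epi_comp f ηY
  have hgfac : (f ≫ ηY) ≫ Injective.factorThru ηX (f ≫ ηY) = ηX :=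
    Injective.comp_factorThru ηX (f ≫ ηY)
  have h1 : fI ≫ Injective.factorThru ηX (f ≫ ηY) = 𝟙 IX := by
    rw [← cancel_epi ηX, ← Category.assoc, hfI, Category.assoc, Category.comp_id]
    rw [← Category.assoc]
    exact hgfac
  have h2 : Injective.factorThru ηX (f ≫ ηY) ≫ fI = 𝟙 IY := by
    rw [← cancel_epi (f ≫ ηY), ← Category.assoc, hgfac, hfI, Category.comp_id]
  haveI hiso : IsIso fI := ⟨Injective.factorThru ηX (f ≫ ηY), h1, h2⟩
  haveI hYηYm : Mono (preadditiveYoneda.map ηY) := aux_yoneda_map_mono ηY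
  have hcomm : preadditiveYoneda.map f ≫ preadditiveYoneda.map ηY =
      preadditiveYoneda.map ηX ≫ preadditiveYoneda.map fI := by
    rw [← Functor.map_comp, ← Functor.map_comp, hfI]
  refine ⟨hiso, aux_yoneda_map_mono f,
    aux_exact₁ (preadditiveYoneda.map f) (preadditiveYoneda.map ηY)
      (preadditiveYoneda.map ηX) (preadditiveYoneda.map fI) hcomm _,
    aux_exact₂ (preadditiveYoneda.map f) (preadditiveYoneda.map ηY)
      (preadditiveYoneda.map ηX) (preadditiveYoneda.map fI) _ _, ?_⟩
  haveI : Epi (cokernel.π (preadditiveYoneda.map ηX) ≫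
      cokernel.map (preadditiveYoneda.map ηX) (preadditiveYoneda.map ηY)
        (preadditiveYoneda.map f) (preadditiveYoneda.map fI)
        (by rw [← Functor.map_comp, ← Functor.map_comp, hfI])) := by
    rw [cokernel.π_desc]
    exact epi_comp _ _
  exact epi_of_epi (cokernel.π (preadditiveYoneda.map ηX)) _
end

section
/- (0-abelian version of Auslander's conjecture on direct summands of Ext.) Let C be a 0-abelian category with enough injectives. For each object X choose a bimorphism η_X : X ⟶ I_X with I_X injective and set E(-,X) := mr(η_X) in Cᵒᵖ ⥤ AddCommGrp. Then for every object X of C, every retract (direct summand) F of E(-,X) in Cᵒᵖ ⥤ AddCommGrp is isomorphic to E(-,V) for some object V of C. Moreover V can be chosen together with a bimorphism h : X ⟶ V in C such that the induced morphism E(-,h) : E(-,X) ⟶ E(-,V) on cokernels is a split epimorphism. -/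
open CategoryTheory Limits

universe v u

open Opposite in
lemma pyoneda_ext {C : Type u} [Category.{v} C] [Preadditive C]
    {B : C} {G : Cᵒᵖ ⥤ AddCommGrpCat.{v}} {α β : preadditiveYoneda.obj B ⟶ G}
    (h : α.app (op B) (𝟙 B) = β.app (op B) (𝟙 B)) : α = β := by
  ext A f
  have h1 : α.app A ((preadditiveYoneda.obj B).map (f.op : op B ⟶ A) (𝟙 B))
      = G.map (f.op : op B ⟶ A) (α.app (op B) (𝟙 B)) :=
    ConcreteCategory.congr_hom (α.naturality (f.op : op B ⟶ A)) (𝟙 B)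
  have h2 : β.app A ((preadditiveYoneda.obj B).map (f.op : op B ⟶ A) (𝟙 B))
      = G.map (f.op : op B ⟶ A) (β.app (op B) (𝟙 B)) :=
    ConcreteCategory.congr_hom (β.naturality (f.op : op B ⟶ A)) (𝟙 B)
  have hf : (preadditiveYoneda.obj B).map (f.op : op B ⟶ A) (𝟙 B) = f := by
    show f ≫ 𝟙 B = f
    exact Category.comp_id f
  rw [hf] at h1 h2
  rw [h1, h2, h]

instance pyoneda_additive {C : Type u} [Category.{v} C] [Preadditive C] :
    (preadditiveYoneda (C := C)).Additive :=
  ⟨by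
    intros X Y f g
    ext A x
    show x ≫ (f + g) = ((preadditiveYoneda.map f).app A + (preadditiveYoneda.map g).app A) x
    rw [AddCommGrpCat.hom_add_apply]
    show x ≫ (f + g) = x ≫ f + x ≫ g
    exact Preadditive.comp_add _ _ _ _ _ _⟩


/-- The `0`-abelian version of Auslander's conjecture on direct summands of `Ext`:
every direct summand of `E(-,X) = cokernel (y(η_X))` is of the form `E(-,V)`,
and `V` can be chosen together with a bimorphism `h : X ⟶ V` such that the induced
morphism `E(-,h)` on cokernels is a split epimorphism. -/
theorem stmt15 {C : Type u} [Category.{v} C] [Preadditive C] [HasFiniteBiproducts C]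
    (h0k : HasZeroKernels C) (h0c : HasZeroCokernels C) [EnoughInjectives C]
    (I : C → C) (η : ∀ A : C, A ⟶ I A) (hinj : ∀ A, Injective (I A))
    (hmono : ∀ A, Mono (η A)) (hepi : ∀ A, Epi (η A))
    (X : C) (F : Cᵒᵖ ⥤ AddCommGrpCat.{v})
    (i : F ⟶ cokernel (preadditiveYoneda.map (η X)))
    (r : cokernel (preadditiveYoneda.map (η X)) ⟶ F)
    (hri : i ≫ r = 𝟙 F) :
    ∃ (V : C) (h : X ⟶ V) (hI : I X ⟶ I V) (comm : η X ≫ hI = h ≫ η V),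
      Mono h ∧ Epi h ∧
      Nonempty (F ≅ cokernel (preadditiveYoneda.map (η V))) ∧
      IsSplitEpi (cokernel.map (preadditiveYoneda.map (η X)) (preadditiveYoneda.map (η V))
        (preadditiveYoneda.map h) (preadditiveYoneda.map hI)
        (by rw [← Functor.map_comp, ← Functor.map_comp, comm])) := by
  open Opposite in
  classical
  haveI : HasBinaryBiproducts C := hasBinaryBiproducts_of_finite_biproducts C
  let π : preadditiveYoneda.obj (I X) ⟶ cokernel (preadditiveYoneda.map (η X)) :=
    cokernel.π (preadditiveYoneda.map (η X))
  haveI hπepi : Epi π := coequalizer.π_epi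
  -- construct the lift u of r ≫ i
  haveI : Epi (π.app (op (I X))) := inferInstance
  obtain ⟨u0, hu0⟩ := (AddCommGrpCat.epi_iff_surjective (π.app (op (I X)))).mp this
    ((π ≫ r ≫ i).app (op (I X)) (𝟙 (I X)))
  let u : I X ⟶ I X := u0
  have hYu : preadditiveYoneda.map u ≫ π = π ≫ r ≫ i := by
    apply pyoneda_ext
    show (preadditiveYoneda.map u ≫ π).app (op (I X)) (𝟙 (I X)) = _
    have e1 : (preadditiveYoneda.map u ≫ π).app (op (I X)) (𝟙 (I X))
        = π.app (op (I X)) (𝟙 (I X) ≫ u) := rfl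
    rw [e1, Category.id_comp]
    exact hu0
  have hYu' : ∀ {T} (w : cokernel (preadditiveYoneda.map (η X)) ⟶ T),
      preadditiveYoneda.map u ≫ π ≫ w = π ≫ r ≫ i ≫ w := by
    intro T w
    rw [← Category.assoc, hYu, Category.assoc, Category.assoc]
  -- the morphism m and its 0-kernel
  let m : (X ⊞ I X) ⟶ I X := biprod.desc (η X) (𝟙 (I X) - u)
  have hmepi : Epi m := by
    haveI : Epi (biprod.inl ≫ m) := by
      show Epi (biprod.inl ≫ biprod.desc (η X) (𝟙 (I X) - u))
      rw [biprod.inl_desc]; exact hepi X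
    exact epi_of_epi biprod.inl m
  obtain ⟨Z, g, hgmono, p, hp, hm⟩ := h0k m
  haveI := hgmono
  haveI hgepi : Epi g := by
    haveI : Epi (p ≫ g) := by rw [← hm]; exact hmepi
    exact epi_of_epi p g
  let h : X ⟶ Z := biprod.inl ≫ p
  have hhg : h ≫ g = η X := by
    show (biprod.inl ≫ p) ≫ g = η X
    rw [Category.assoc, ← hm]
    exact biprod.inl_desc _ _
  have hmonoh : Mono h := by
    haveI : Mono (h ≫ g) := by rw [hhg]; exact hmono X
    exact mono_of_mono h g
  have hepih : Epi h := by
    apply Preadditive.epi_of_cancel_zero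
    intro T t ht
    haveI := hinj T
    haveI := hmono T
    have hs : g ≫ Injective.factorThru (t ≫ η T) g = t ≫ η T :=
      Injective.comp_factorThru _ _
    have h1 : η X ≫ Injective.factorThru (t ≫ η T) g = 0 := by
      rw [← hhg, Category.assoc, hs, ← Category.assoc, ht, zero_comp]
    have h2 : Injective.factorThru (t ≫ η T) g = 0 := by
      haveI := hepi X
      exact (cancel_epi (η X)).mp (by rw [h1, comp_zero])
    have h3 : t ≫ η T = 0 := by rw [← hs, h2, comp_zero]
    exact (cancel_mono (η T)).mp (by rw [h3, zero_comp])
  -- the comparison maps a, b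
  haveI := hinj Z
  haveI := hinj X
  haveI := hmono Z
  haveI := hepi Z
  let a : I X ⟶ I Z := Injective.factorThru (η Z) g
  have hga : g ≫ a = η Z := Injective.comp_factorThru _ _
  let b : I Z ⟶ I X := Injective.factorThru g (η Z)
  have hηb : η Z ≫ b = g := Injective.comp_factorThru _ _
  have hab : a ≫ b = 𝟙 (I X) := by
    apply (cancel_epi g).mp
    rw [← Category.assoc, hga, hηb, Category.comp_id]
  have hba : b ≫ a = 𝟙 (I Z) := by
    apply (cancel_epi (η Z)).mp
    rw [← Category.assoc, hηb, hga, Category.comp_id]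
  have comm : η X ≫ a = h ≫ η Z := by rw [← hhg, Category.assoc, hga]
  -- key vanishing
  obtain ⟨q⟩ := hp.exists_splitEpi
  have hgq : g = q.section_ ≫ m := by rw [hm, ← Category.assoc, q.id, Category.id_comp]
  have hc : preadditiveYoneda.map (η X) ≫ π ≫ r = 0 := by
    rw [← Category.assoc, cokernel.condition, zero_comp]
  have hYsub : preadditiveYoneda.map (𝟙 (I X) - u) ≫ (π ≫ r) = 0 := by
    rw [Functor.map_sub, CategoryTheory.Functor.map_id, Preadditive.sub_comp,
      Category.id_comp, hYu' r, hri, Category.comp_id, sub_self]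
  have hYm : preadditiveYoneda.map m ≫ (π ≫ r) = 0 := by
    have h1 : m = biprod.fst ≫ η X + biprod.snd ≫ (𝟙 (I X) - u) := by
      apply biprod.hom_ext' <;> simp [m]
    rw [h1, Functor.map_add, Preadditive.add_comp, Functor.map_comp, Functor.map_comp,
      Category.assoc, Category.assoc, hYsub, comp_zero, add_zero, hc, comp_zero]
  have hYg : preadditiveYoneda.map g ≫ (π ≫ r) = 0 := by
    rw [hgq, Functor.map_comp, Category.assoc, hYm, comp_zero]
  -- the map ψ
  let πZ : preadditiveYoneda.obj (I Z) ⟶ cokernel (preadditiveYoneda.map (η Z)) :=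
    cokernel.π (preadditiveYoneda.map (η Z))
  haveI hπZepi : Epi πZ := coequalizer.π_epi
  have hZb : preadditiveYoneda.map (η Z) ≫ (preadditiveYoneda.map b ≫ (π ≫ r)) = 0 := by
    rw [← Category.assoc, ← Functor.map_comp, hηb, hYg]
  let ψ : cokernel (preadditiveYoneda.map (η Z)) ⟶ F :=
    cokernel.desc _ (preadditiveYoneda.map b ≫ (π ≫ r)) hZb
  have hψ : πZ ≫ ψ = preadditiveYoneda.map b ≫ (π ≫ r) := cokernel.π_desc _ _ _
  -- the map τ
  have commY : preadditiveYoneda.map (η X) ≫ preadditiveYoneda.map a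
      = preadditiveYoneda.map h ≫ preadditiveYoneda.map (η Z) := by
    rw [← Functor.map_comp, ← Functor.map_comp, comm]
  let τ : cokernel (preadditiveYoneda.map (η X)) ⟶ cokernel (preadditiveYoneda.map (η Z)) :=
    cokernel.map (preadditiveYoneda.map (η X)) (preadditiveYoneda.map (η Z))
      (preadditiveYoneda.map h) (preadditiveYoneda.map a) commY
  have hτπ : π ≫ τ = preadditiveYoneda.map a ≫ πZ := cokernel.π_desc _ _ _
  -- τ is fixed by r ≫ i
  have hp2 : (𝟙 (I X) - u) ≫ a = (biprod.inr ≫ p) ≫ η Z := by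
    have h1 : biprod.inr ≫ m = 𝟙 (I X) - u := biprod.inr_desc _ _
    rw [← h1, hm, ← Category.assoc, Category.assoc, hga]
  have key : preadditiveYoneda.map ((𝟙 (I X) - u) ≫ a) ≫ πZ = 0 := by
    rw [hp2, Functor.map_comp, Category.assoc, cokernel.condition, comp_zero]
  have key2 : preadditiveYoneda.map (u ≫ a) ≫ πZ = preadditiveYoneda.map a ≫ πZ := by
    have e1 : (𝟙 (I X) - u) ≫ a = a - u ≫ a := by
      rw [Preadditive.sub_comp, Category.id_comp]
    rw [e1, Functor.map_sub, Preadditive.sub_comp, sub_eq_zero] at key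
    exact key.symm
  have hfix2 : r ≫ i ≫ τ = τ := by
    apply (cancel_epi π).mp
    rw [← hYu' τ, hτπ, ← Category.assoc, ← Functor.map_comp, key2]
  have hτψ : τ ≫ ψ = r := by
    apply (cancel_epi π).mp
    rw [← Category.assoc, hτπ, Category.assoc, hψ, ← Category.assoc, ← Functor.map_comp,
      hab, CategoryTheory.Functor.map_id, Category.id_comp]
  have hsec : ψ ≫ i ≫ τ = 𝟙 (cokernel (preadditiveYoneda.map (η Z))) := by
    apply (cancel_epi πZ).mp
    rw [Category.comp_id, ← Category.assoc, hψ]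
    simp only [Category.assoc]
    rw [hfix2, hτπ, ← Category.assoc, ← Functor.map_comp, hba,
      CategoryTheory.Functor.map_id, Category.id_comp]
  refine ⟨Z, h, a, comm, hmonoh, hepih, ⟨⟨i ≫ τ, ψ, ?_, ?_⟩⟩, ?_⟩
  · rw [Category.assoc, hτψ, hri]
  · exact hsec
  · exact IsSplitEpi.mk' ⟨ψ ≫ i, by rw [Category.assoc]; exact hsec⟩
end

section
/- (0-abelian Hilton–Rees theorem.) Let C be a 0-abelian category with enough injectives. For each object X choose a bimorphism η_X : X ⟶ I_X with I_X injective and set E(-,X) := mr(η_X) in Cᵒᵖ ⥤ AddCommGrp; for f : X ⟶ Y let E(-,f) : E(-,X) ⟶ E(-,Y) be the morphism induced on cokernels by the unique f_I : I_X ⟶ I_Y with f_I ∘ η_X = η_Y ∘ f. Then for all objects X, Y of C: (1) the map Hom_C(X,Y) → Hom(E(-,X), E(-,Y)), f ↦ E(-,f), is an additive group homomorphism; (2) it is surjective, i.e. every morphism α : E(-,X) ⟶ E(-,Y) equals E(-,f) for some f : X ⟶ Y; (3) its kernel consists exactly of the morphisms that factor through an injective object of C, i.e. E(-,f) = 0 if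 and only if f factors through an injective object. (Hence the injectively stable Hom-group of C is isomorphic to Hom(E(-,X), E(-,Y)).) -/
open CategoryTheory Limits

universe v u

/-- Given `η_X : X ⟶ I_X`, `η_Y : Y ⟶ I_Y`, a morphism `f : X ⟶ Y` and a compatible
`f_I : I_X ⟶ I_Y`, this is the induced morphism
`E(-,f) : E(-,X) = cokernel (y(η_X)) ⟶ E(-,Y) = cokernel (y(η_Y))` on cokernels, where `y`
is the additive Yoneda embedding. -/
noncomputable def Emap {C : Type u} [Category.{v} C] [Preadditive C]
    {X Y IX IY : C} (ηX : X ⟶ IX) (ηY : Y ⟶ IY)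
    (f : X ⟶ Y) (fI : IX ⟶ IY) (comm : ηX ≫ fI = f ≫ ηY) :
    cokernel (preadditiveYoneda.map ηX) ⟶ cokernel (preadditiveYoneda.map ηY) :=
  cokernel.map _ _ (preadditiveYoneda.map f) (preadditiveYoneda.map fI)
    (by rw [← Functor.map_comp, ← Functor.map_comp, comm])

open Opposite
section HRAux
variable {C : Type u} [Category.{v} C] [Preadditive C]

lemma HR.yoneda_hom_ext {A : C} {F : Cᵒᵖ ⥤ AddCommGrpCat.{v}}
    (τ σ : preadditiveYoneda.obj A ⟶ F)
    (h : τ.app (op A) (𝟙 A) = σ.app (op A) (𝟙 A)) : τ = σ := by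
  ext Z (g : Z.unop ⟶ A)
  have hτ := congrFun (congrArg (fun (t : _ ⟶ _) => (t : _ → _)) (τ.naturality g.op)) (𝟙 A)
  have hσ := congrFun (congrArg (fun (t : _ ⟶ _) => (t : _ → _)) (σ.naturality g.op)) (𝟙 A)
  simp at hτ hσ
  have hτ' : (τ.app Z) (g ≫ 𝟙 A) = (F.map g.op) ((τ.app (op A)) (𝟙 A)) :=
    congrFun (congrArg (fun t => (ConcreteCategory.hom t : _ → _)) (τ.naturality g.op)) (𝟙 A)
  have hσ' : (σ.app Z) (g ≫ 𝟙 A) = (F.map g.op) ((σ.app (op A)) (𝟙 A)) :=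
    congrFun (congrArg (fun t => (ConcreteCategory.hom t : _ → _)) (σ.naturality g.op)) (𝟙 A)
  rw [Category.comp_id] at hτ' hσ'
  rw [hτ', hσ', h]

lemma HR.mono_yoneda_map {A B : C} (f : A ⟶ B) (hf : Mono f) :
    Mono (preadditiveYoneda.map f) := by
  haveI : ∀ Z : Cᵒᵖ, Mono ((preadditiveYoneda.map f).app Z) := by
    intro Z
    rw [AddCommGrpCat.mono_iff_injective]
    intro g h e
    have e2 : g ≫ f = h ≫ f := e
    exact (cancel_mono f).1 e2
  exact NatTrans.mono_of_mono_app _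

lemma HR.yoneda_map_add {A B : C} (f g : A ⟶ B) :
    preadditiveYoneda.map (f + g) = preadditiveYoneda.map f + preadditiveYoneda.map g := by
  ext Z (h : Z.unop ⟶ A)
  show h ≫ (f + g) = h ≫ f + h ≫ g
  exact Preadditive.comp_add _ _ _ _ _ _

lemma HR.pi_Emap {X Y IX IY : C} (ηX : X ⟶ IX) (ηY : Y ⟶ IY)
    (f : X ⟶ Y) (fI : IX ⟶ IY) (comm : ηX ≫ fI = f ≫ ηY) :
    cokernel.π (preadditiveYoneda.map ηX) ≫ Emap ηX ηY f fI comm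
      = preadditiveYoneda.map fI ≫ cokernel.π (preadditiveYoneda.map ηY) := by
  simp [Emap]

end HRAux
/-- The `0`-abelian Hilton–Rees theorem: `f ↦ E(-,f)` is additive, surjective onto
`Hom(E(-,X), E(-,Y))`, and its kernel consists exactly of the morphisms factoring
through an injective object. -/
theorem stmt16 {C : Type u} [Category.{v} C] [Preadditive C] [HasFiniteBiproducts C]
    (h0k : HasZeroKernels C) (h0c : HasZeroCokernels C) [EnoughInjectives C]
    {X Y IX IY : C} (ηX : X ⟶ IX) (ηY : Y ⟶ IY)
    (hIX : Injective IX) (hIY : Injective IY)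
    (hXm : Mono ηX) (hXe : Epi ηX) (hYm : Mono ηY) (hYe : Epi ηY) :
    (∀ (f g : X ⟶ Y) (fI gI sI : IX ⟶ IY)
        (commf : ηX ≫ fI = f ≫ ηY) (commg : ηX ≫ gI = g ≫ ηY)
        (comms : ηX ≫ sI = (f + g) ≫ ηY),
      Emap ηX ηY (f + g) sI comms = Emap ηX ηY f fI commf + Emap ηX ηY g gI commg) ∧
    (∀ α : cokernel (preadditiveYoneda.map ηX) ⟶ cokernel (preadditiveYoneda.map ηY),
      ∃ (f : X ⟶ Y) (fI : IX ⟶ IY) (comm : ηX ≫ fI = f ≫ ηY),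
        α = Emap ηX ηY f fI comm) ∧
    (∀ (f : X ⟶ Y) (fI : IX ⟶ IY) (comm : ηX ≫ fI = f ≫ ηY),
      Emap ηX ηY f fI comm = 0 ↔
        ∃ (J : C) (_ : Injective J) (a : X ⟶ J) (b : J ⟶ Y), f = a ≫ b) := by
  haveI := hXm; haveI := hXe; haveI := hYm
  haveI hmy : Mono (preadditiveYoneda.map ηY) := HR.mono_yoneda_map ηY hYm
  set π1 := cokernel.π (preadditiveYoneda.map ηX) with hπ1
  set π2 := cokernel.π (preadditiveYoneda.map ηY) with hπ2
  refine ⟨?_, ?_, ?_⟩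
  · -- additivity
    intro f g fI gI sI commf commg comms
    have hsI : sI = fI + gI := by
      apply (cancel_epi ηX).1
      rw [comms, Preadditive.add_comp, ← commf, ← commg, Preadditive.comp_add]
    apply (cancel_epi π1).1
    rw [HR.pi_Emap, Preadditive.comp_add, HR.pi_Emap, HR.pi_Emap, hsI,
      HR.yoneda_map_add, Preadditive.add_comp]
  · -- surjectivity
    intro α
    -- lift π1 ≫ α through π2 on the representable y(IX)
    have hepi : Epi (π2.app (op IX)) := by
      haveI : Epi π2 := by infer_instance
      exact (NatTrans.epi_iff_epi_app π2).1 inferInstance (op IX)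
    obtain ⟨fI, hfI⟩ : ∃ fI : IX ⟶ IY, π2.app (op IX) fI = (π1 ≫ α).app (op IX) (𝟙 IX) :=
      (AddCommGrpCat.epi_iff_surjective _).1 hepi
      ((π1 ≫ α).app (op IX) (𝟙 IX))
    have hβ : preadditiveYoneda.map (fI : IX ⟶ IY) ≫ π2 = π1 ≫ α := by
      apply HR.yoneda_hom_ext
      have h1 : (preadditiveYoneda.map fI ≫ π2).app (op IX) (𝟙 IX)
          = π2.app (op IX) (𝟙 IX ≫ fI) := rfl
      rw [h1, Category.id_comp, hfI]
    have hu : preadditiveYoneda.map (ηX ≫ fI) ≫ π2 = 0 := by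
      rw [Functor.map_comp, Category.assoc, hβ, ← Category.assoc, hπ1,
        cokernel.condition, zero_comp]
    obtain ⟨f, hf⟩ := preadditiveYoneda.map_surjective
      (Abelian.monoLift (preadditiveYoneda.map ηY) _ hu)
    have hcomm : f ≫ ηY = ηX ≫ fI := by
      apply preadditiveYoneda.map_injective
      rw [Functor.map_comp, hf, Abelian.monoLift_comp]
    refine ⟨f, fI, hcomm.symm, ?_⟩
    apply (cancel_epi π1).1
    rw [HR.pi_Emap, hβ]
  · -- kernel characterization
    intro f fI comm
    constructor
    · intro hE
      have h0 : preadditiveYoneda.map fI ≫ π2 = 0 := by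
        have := HR.pi_Emap ηX ηY f fI comm
        rw [hE, comp_zero] at this
        exact this.symm
      obtain ⟨g, hg⟩ := preadditiveYoneda.map_surjective
        (Abelian.monoLift (preadditiveYoneda.map ηY) _ h0)
      have hgY : g ≫ ηY = fI := by
        apply preadditiveYoneda.map_injective
        rw [Functor.map_comp, hg, Abelian.monoLift_comp]
      refine ⟨IX, hIX, ηX, g, ?_⟩
      apply (cancel_mono ηY).1
      rw [Category.assoc, hgY, ← comm]
    · rintro ⟨J, hJ, a, b, rfl⟩
      haveI := hJ
      set a' : IX ⟶ J := Injective.factorThru a ηX with ha'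
      have haa : ηX ≫ a' = a := Injective.comp_factorThru a ηX
      have hfI : fI = (a' ≫ b) ≫ ηY := by
        apply (cancel_epi ηX).1
        rw [comm, ← Category.assoc, ← Category.assoc, haa]
      apply (cancel_epi π1).1
      rw [HR.pi_Emap, comp_zero, hfI, Functor.map_comp, Category.assoc,
        cokernel.condition, comp_zero]
end

section
/- Let R be a ring. The following are equivalent: (a) every R-linear map f : P → Q between finitely generated projective left R-modules factors as f = g ∘ h, where h : P → Z is a surjective R-linear map onto a finitely generated projective left R-module Z admitting an R-linear section (i.e. h is a split epimorphism of modules) and g : Z → Q is an injective R-linear map; (b) R is left semi-hereditary, i.e. every finitely generated submodule of a projective left R-module is projective. (Condition (a) says exactly that the category of finitely generated projective left R-modules has 0-kernels.) -/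
universe u

/-- A ring `R` is left semi-hereditary iff the category of finitely generated projective
left `R`-modules has `0`-kernels, i.e. every linear map between finitely generated
projective modules factors as a split epimorphism (a surjection with a linear section)
followed by a monomorphism (an injection). -/
theorem stmt18 (R : Type u) [Ring R] :
    (∀ (P Q : Type u) [AddCommGroup P] [Module R P] [AddCommGroup Q] [Module R Q],
      Module.Finite R P → Module.Projective R P →
      Module.Finite R Q → Module.Projective R Q →
      ∀ f : P →ₗ[R] Q,
        ∃ (Z : Type u) (_ : AddCommGroup Z) (_ : Module R Z),
          Module.Finite R Z ∧ Module.Projective R Z ∧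
          ∃ (h : P →ₗ[R] Z) (g : Z →ₗ[R] Q),
            Function.Surjective h ∧ (∃ s : Z →ₗ[R] P, h ∘ₗ s = LinearMap.id) ∧
            Function.Injective g ∧ f = g ∘ₗ h) ↔
    (∀ (M : Type u) [AddCommGroup M] [Module R M],
      Module.Projective R M → ∀ N : Submodule R M, N.FG → Module.Projective R N) := by
  constructor
  · -- factorization ⇒ semi-hereditary
    intro hyp M _ _ hM N hN
    obtain ⟨n, x, hx⟩ := Submodule.fg_iff_exists_fin_generating_family.mp hN
    obtain ⟨s, hs⟩ := Module.projective_def'.mp hM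
    have hsinj : Function.Injective s := by
      intro a b hab
      have := congrArg (Finsupp.linearCombination R id) hab
      have h1 : ∀ m, Finsupp.linearCombination R id (s m) = m := fun m =>
        congrArg (fun g => g m) hs
      rwa [h1, h1] at this
    classical
    set S : Finset M := Finset.univ.biUnion (fun i => (s (x i)).support) with hS
    set Q : Submodule R (M →₀ R) := Finsupp.supported R R (↑S : Set M) with hQ
    have hNsub : N ≤ Q.comap s := by
      rw [← hx, Submodule.span_le]
      rintro _ ⟨i, rfl⟩
      simp only [Submodule.mem_comap, hQ, Finsupp.mem_supported]
      intro a ha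
      simp only [hS, Finset.coe_biUnion, Finset.coe_univ, Set.mem_iUnion]
      exact ⟨i, Set.mem_univ i, ha⟩
    set φ : (Fin n →₀ R) →ₗ[R] M := Finsupp.linearCombination R x with hφ
    have hφrange : LinearMap.range φ = N := by
      rw [hφ, Finsupp.range_linearCombination, hx]
    set f : (Fin n →₀ R) →ₗ[R] ↥Q :=
      LinearMap.codRestrict Q (s ∘ₗ φ) (fun c => by
        apply hNsub
        rw [← hφrange]; exact ⟨c, rfl⟩) with hf
    have eQ : ↥Q ≃ₗ[R] ((↑S : Set M) →₀ R) := Finsupp.supportedEquivFinsupp (↑S : Set M)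
    haveI : Module.Finite R ((↑S : Set M) →₀ R) := Module.Finite.equiv
      (Finsupp.linearEquivFunOnFinite R R (↑S : Set M)).symm
    haveI : Module.Finite R ↥Q := Module.Finite.equiv eQ.symm
    haveI hQproj : Module.Projective R ↥Q := Module.Projective.of_equiv eQ.symm
    haveI : Module.Finite R (Fin n →₀ R) := Module.Finite.equiv
      (Finsupp.linearEquivFunOnFinite R R (Fin n)).symm
    obtain ⟨Z, _, _, hZfin, hZproj, h, g, hsurj, -, hginj, hfac⟩ :=
      hyp (Fin n →₀ R) ↥Q inferInstance inferInstance inferInstance hQproj f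
    -- N ≃ Z
    set ψ : ↥N →ₗ[R] ↥Q :=
      LinearMap.codRestrict Q (s ∘ₗ N.subtype) (fun c => hNsub c.2) with hψ
    have hψinj : Function.Injective ψ := by
      intro a b hab
      have : s ((N.subtype) a) = s ((N.subtype) b) := congrArg Subtype.val hab
      exact Subtype.ext (hsinj this)
    have hrange : LinearMap.range ψ = LinearMap.range g := by
      have h1 : LinearMap.range f = LinearMap.range g := by
        rw [hfac, LinearMap.range_comp, LinearMap.range_eq_top.mpr hsurj,
          Submodule.map_top]
      rw [← h1]
      ext q
      constructor
      · rintro ⟨m, rfl⟩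
        obtain ⟨c, hc⟩ : (m : M) ∈ LinearMap.range φ := by rw [hφrange]; exact m.2
        exact ⟨c, Subtype.ext (by simp [hf, hψ, hc])⟩
      · rintro ⟨c, rfl⟩
        refine ⟨⟨φ c, by rw [← hφrange]; exact ⟨c, rfl⟩⟩, Subtype.ext ?_⟩
        simp [hf, hψ]
    have e : ↥N ≃ₗ[R] Z :=
      (LinearEquiv.ofInjective ψ hψinj).trans
        ((LinearEquiv.ofEq _ _ hrange).trans (LinearEquiv.ofInjective g hginj).symm)
    exact Module.Projective.of_equiv e.symm
  · -- semi-hereditary ⇒ factorization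
    intro hyp P Q _ _ _ _ hPfin hPproj hQfin hQproj f
    haveI := hPfin; haveI := hPproj; haveI := hQfin
    set Z := ↥(LinearMap.range f) with hZ
    have hfg : (LinearMap.range f).FG := by
      have : Module.Finite R Z := Module.Finite.range f
      exact Module.Finite.iff_fg.mp this
    have hZproj : Module.Projective R Z := hyp Q hQproj (LinearMap.range f) hfg
    haveI := hZproj
    refine ⟨Z, inferInstance, inferInstance, Module.Finite.range f, hZproj,
      f.rangeRestrict, (LinearMap.range f).subtype,
      f.surjective_rangeRestrict, ?_, Subtype.val_injective, ?_⟩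
    · obtain ⟨sec, hsec⟩ := Module.projective_lifting_property f.rangeRestrict
        LinearMap.id f.surjective_rangeRestrict
      exact ⟨sec, hsec⟩
    · ext p; rfl
end

section
/- Let Λ be a right semi-hereditary ring, i.e. every finitely generated submodule of a projective right Λ-module is projective. Then for every finitely generated projective right Λ-module P, the endomorphism ring End_Λ(P) of P is right semi-hereditary: every finitely generated submodule of a projective right End_Λ(P)-module is projective. -/
universe u

section Aux

variable {Λ : Type u} [Ring Λ] {P : Type u} [AddCommGroup P] [Module Λᵐᵒᵖ P]
variable {M : Type u}

/-- Turn a finitely supported family of endomorphisms of `P` indexed by `M` into a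
linear map `P →ₗ (M →₀ P)`. -/
noncomputable def phi (c : M →₀ (Module.End Λᵐᵒᵖ P)ᵐᵒᵖ) : P →ₗ[Λᵐᵒᵖ] (M →₀ P) :=
  c.sum fun m e => (Finsupp.lsingle m).comp e.unop

theorem phi_coord (c : M →₀ (Module.End Λᵐᵒᵖ P)ᵐᵒᵖ) (p : P) (m : M) :
    phi c p m = (c m).unop p := by
  classical
  unfold phi
  rw [Finsupp.sum, LinearMap.coe_sum, Finset.sum_apply, Finsupp.finset_sum_apply]
  simp only [LinearMap.comp_apply, Finsupp.lsingle_apply, Finsupp.single_apply]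
  rw [Finset.sum_ite_eq' c.support m (fun m' => (c m').unop p)]
  split_ifs with h
  · rfl
  · rw [Finsupp.notMem_support_iff.mp h]
    simp

theorem phi_zero : phi (0 : M →₀ (Module.End Λᵐᵒᵖ P)ᵐᵒᵖ) = 0 := by
  unfold phi
  simp [Finsupp.sum_zero_index]

theorem phi_add (c d : M →₀ (Module.End Λᵐᵒᵖ P)ᵐᵒᵖ) : phi (c + d) = phi c + phi d := by
  refine LinearMap.ext fun p => Finsupp.ext fun m => ?_
  simp [phi_coord]

theorem phi_smul (a : (Module.End Λᵐᵒᵖ P)ᵐᵒᵖ) (c : M →₀ (Module.End Λᵐᵒᵖ P)ᵐᵒᵖ) :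
    phi (a • c) = (phi c).comp a.unop := by
  refine LinearMap.ext fun p => Finsupp.ext fun m => ?_
  simp only [phi_coord, LinearMap.comp_apply, Finsupp.smul_apply, smul_eq_mul,
    MulOpposite.unop_mul, Module.End.mul_apply]

theorem phi_injective : Function.Injective (phi (Λ := Λ) (P := P) (M := M)) := by
  intro c d h
  refine Finsupp.ext fun m => ?_
  refine MulOpposite.unop_injective (LinearMap.ext fun p => ?_)
  rw [← phi_coord, ← phi_coord, h]

/-- `phi` as an additive monoid hom. -/
noncomputable def phiHom : (M →₀ (Module.End Λᵐᵒᵖ P)ᵐᵒᵖ) →+ (P →ₗ[Λᵐᵒᵖ] (M →₀ P)) where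
  toFun := phi
  map_zero' := phi_zero
  map_add' := phi_add

end Aux

/-- If `Λ` is right semi-hereditary, then the endomorphism ring of any finitely generated
projective right `Λ`-module is right semi-hereditary.  Right modules are formalized as
modules over the opposite ring. -/
theorem stmt19 (Λ : Type u) [Ring Λ]
    (hsh : ∀ (M : Type u) [AddCommGroup M] [Module Λᵐᵒᵖ M],
      Module.Projective Λᵐᵒᵖ M → ∀ N : Submodule Λᵐᵒᵖ M, N.FG → Module.Projective Λᵐᵒᵖ N)
    (P : Type u) [AddCommGroup P] [Module Λᵐᵒᵖ P]
    [Module.Finite Λᵐᵒᵖ P] [Module.Projective Λᵐᵒᵖ P] :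
    ∀ (M : Type u) [AddCommGroup M] [Module (Module.End Λᵐᵒᵖ P)ᵐᵒᵖ M],
      Module.Projective (Module.End Λᵐᵒᵖ P)ᵐᵒᵖ M →
      ∀ N : Submodule (Module.End Λᵐᵒᵖ P)ᵐᵒᵖ M, N.FG →
        Module.Projective (Module.End Λᵐᵒᵖ P)ᵐᵒᵖ N := by
  classical
  intro M _ _ hM N hN
  obtain ⟨k, n, hspan⟩ := Submodule.fg_iff_exists_fin_generating_family.mp hN
  obtain ⟨j, hj⟩ := Module.projective_def.mp hM
  haveI hYproj : Module.Projective Λᵐᵒᵖ (M →₀ P) :=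
    Module.Projective.of_equiv (finsuppLequivDFinsupp (R := Λᵐᵒᵖ) (M := P) (ι := M)).symm
  obtain ⟨G, hG⟩ : ∃ G : (Fin k → P) →ₗ[Λᵐᵒᵖ] (M →₀ P), ∀ v, G v = ∑ i, phi (j (n i)) (v i) :=
    ⟨∑ i, (phi (j (n i))).comp (LinearMap.proj i), fun v => by
      simp [LinearMap.sum_apply, LinearMap.comp_apply]⟩
  have hXfg : (LinearMap.range G).FG := by
    have h1 : (⊤ : Submodule Λᵐᵒᵖ (Fin k → P)).FG := Module.Finite.fg_top
    have h2 := h1.map G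
    rwa [Submodule.map_top] at h2
  haveI hXproj : Module.Projective Λᵐᵒᵖ (LinearMap.range G) := hsh (M →₀ P) hYproj _ hXfg
  obtain ⟨s, hs⟩ := Module.projective_lifting_property G.rangeRestrict LinearMap.id
      G.surjective_rangeRestrict
  have hs' : ∀ x : LinearMap.range G, G (s x) = (x : M →₀ P) := by
    intro x
    have h := congrArg Subtype.val (LinearMap.ext_iff.mp hs x)
    simpa using h
  have hni : ∀ i, n i ∈ N := fun i => by
    rw [← hspan]; exact Submodule.subset_span ⟨i, rfl⟩
  have hmem : ∀ x ∈ N, ∀ p, phi (j x) p ∈ LinearMap.range G := by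
    intro x hx
    rw [← hspan] at hx
    induction hx using Submodule.span_induction with
    | mem y hy =>
        obtain ⟨i, rfl⟩ := hy
        intro p
        refine ⟨Pi.single i p, ?_⟩
        rw [hG, Finset.sum_eq_single i (fun b _ hb => by rw [Pi.single_eq_of_ne hb, map_zero])
          (fun h => absurd (Finset.mem_univ i) h), Pi.single_eq_same]
    | zero => intro p; simp [phi_zero]
    | add y z _ _ hy hz =>
        intro p
        rw [map_add, phi_add, LinearMap.add_apply]
        exact Submodule.add_mem _ (hy p) (hz p)
    | smul a y _ hy =>
        intro p
        rw [map_smul, phi_smul, LinearMap.comp_apply]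
        exact hy _
  -- the section `σ` of `π`
  obtain ⟨σ, hσ⟩ : ∃ σ : N →ₗ[(Module.End Λᵐᵒᵖ P)ᵐᵒᵖ] (Fin k → (Module.End Λᵐᵒᵖ P)ᵐᵒᵖ),
      ∀ (x : N) (i : Fin k) (p : P),
        (σ x i).unop p
          = s (((phi (j x.1)).codRestrict (LinearMap.range G) (hmem x.1 x.2)) p) i := by
    refine ⟨⟨⟨fun x => fun i => MulOpposite.op
      ((LinearMap.proj (R := Λᵐᵒᵖ) (φ := fun _ : Fin k => P) i).comp
        (s.comp ((phi (j x.1)).codRestrict (LinearMap.range G) (hmem x.1 x.2)))), ?_⟩, ?_⟩,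
      fun x i p => rfl⟩
    · intro x y
      funext i
      simp only [Pi.add_apply]
      show MulOpposite.op _ = MulOpposite.op _ + MulOpposite.op _
      rw [← MulOpposite.op_add]
      refine congrArg MulOpposite.op (LinearMap.ext fun p => ?_)
      have hc : ((phi (j ((x + y) : N).1)).codRestrict (LinearMap.range G)
            (hmem _ (x + y).2)) p
          = ((phi (j x.1)).codRestrict (LinearMap.range G) (hmem _ x.2)) p
            + ((phi (j y.1)).codRestrict (LinearMap.range G) (hmem _ y.2)) p := by
        apply Subtype.ext
        simp only [LinearMap.codRestrict_apply, Submodule.coe_add, map_add, phi_add,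
          LinearMap.add_apply]
      show s _ i = (LinearMap.proj i).comp (s.comp _) p + (LinearMap.proj i).comp (s.comp _) p
      simp only [LinearMap.comp_apply, LinearMap.proj_apply]
      rw [hc, map_add]
      rfl
    · intro a x
      funext i
      simp only [RingHom.id_apply, Pi.smul_apply, smul_eq_mul]
      apply MulOpposite.unop_injective
      rw [MulOpposite.unop_mul]
      simp only [MulOpposite.unop_op]
      refine LinearMap.ext fun p => ?_
      rw [Module.End.mul_apply]
      have hc : ((phi (j ((a • x) : N).1)).codRestrict (LinearMap.range G)
            (hmem _ (a • x).2)) p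
          = ((phi (j x.1)).codRestrict (LinearMap.range G) (hmem _ x.2)) (a.unop p) := by
        apply Subtype.ext
        simp only [LinearMap.codRestrict_apply, Submodule.coe_smul, map_smul, phi_smul,
          LinearMap.comp_apply]
      show s (((phi (j ((a • x) : N).1)).codRestrict (LinearMap.range G) (hmem _ (a • x).2)) p) i
          = s (((phi (j x.1)).codRestrict (LinearMap.range G) (hmem _ x.2)) (a.unop p)) i
      rw [hc]
  -- the projection `π` onto `N`
  obtain ⟨π, hπ⟩ : ∃ π : (Fin k → (Module.End Λᵐᵒᵖ P)ᵐᵒᵖ) →ₗ[(Module.End Λᵐᵒᵖ P)ᵐᵒᵖ] N,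
      ∀ v, ((π v : N) : M) = ∑ i, v i • n i :=
    ⟨∑ i, (LinearMap.toSpanSingleton _ _ (⟨n i, hni i⟩ : N)).comp (LinearMap.proj i),
     fun v => by
      simp [LinearMap.sum_apply, LinearMap.toSpanSingleton_apply]⟩
  refine Module.Projective.of_split σ π (LinearMap.ext fun x => ?_)
  refine Subtype.ext ?_
  rw [LinearMap.comp_apply, hπ, LinearMap.id_apply]
  -- key computation
  have h1 : G.comp (s.comp ((phi (j x.1)).codRestrict (LinearMap.range G) (hmem x.1 x.2)))
      = phi (j x.1) := by
    refine LinearMap.ext fun p => ?_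
    rw [LinearMap.comp_apply, LinearMap.comp_apply, hs']
    rfl
  have h2 : phi (j (∑ i, σ x i • n i)) = phi (j x.1) := by
    rw [map_sum j]
    have hb : phi (∑ i, j (σ x i • n i)) = ∑ i, phi (j (σ x i • n i)) :=
      map_sum (phiHom (Λ := Λ) (P := P) (M := M)) _ _
    rw [hb, ← h1]
    refine LinearMap.ext fun p => ?_
    rw [LinearMap.sum_apply, LinearMap.comp_apply, LinearMap.comp_apply, hG]
    refine Finset.sum_congr rfl fun i _ => ?_
    rw [map_smul, phi_smul, LinearMap.comp_apply, hσ]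
  exact hj.injective (phi_injective h2)
end
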